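/- arXiv:1804.10480 — 8 statements merged into one kernel-verified Lean document; each statement's English description precedes it below -/
import Mathlib

section
/- If A is a skeleton of the IFS S = {S_1,...,S_N}, then A is also a skeleton of the n-th iterated IFS S^n = {S_I : I ∈ Σ^n}: that is, A ⊆ ⋃_{I ∈ Σ^n} S_I(A) and the Hata graph of A with respect to S^n (vertices S_I for I ∈ Σ^n, edge between S_I and S_J iff S_I(A) ∩ S_J(A) ≠ ∅) is connected. -/
/-- Hata graph of a set `A` with respect to an indexed family of maps. -/
def hataGraph {ι E : Type*} (S : ι → E → E) (A : Set E) : SimpleGraph ι where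
  Adj i j := i ≠ j ∧ (S i '' A ∩ S j '' A).Nonempty
  symm := by
    constructor
    intro i j h
    exact ⟨h.1.symm, by rw [Set.inter_comm]; exact h.2⟩
  loopless := by
    constructor
    intro i h
    exact h.1 rfl

/-- For a word `I = i₁…iₘ`, `wordMap S I = S i₁ ∘ ⋯ ∘ S iₘ`. -/
def wordMap {E : Type*} {N : ℕ} (S : Fin N → E → E) : List (Fin N) → E → E
  | [] => id
  | i :: I => S i ∘ wordMap S I

theorem skeleton_of_iterated_IFS
    {d N : ℕ}
    (S : Fin N → EuclideanSpace ℝ (Fin d) → EuclideanSpace ℝ (Fin d))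
    (r : Fin N → ℝ)
    (hr : ∀ i, 0 < r i ∧ r i < 1)
    (hsim : ∀ i x y, dist (S i x) (S i y) = r i * dist x y)
    (K : Set (EuclideanSpace ℝ (Fin d)))
    (hKne : K.Nonempty) (hKc : IsCompact K)
    (hKinv : K = ⋃ i, S i '' K)
    (A : Set (EuclideanSpace ℝ (Fin d)))
    (hAK : A ⊆ K) (hAfin : A.Finite)
    (hstable : A ⊆ ⋃ i, S i '' A)
    (hconn : (hataGraph S A).Connected)
    (n : ℕ) (hn : 1 ≤ n) :
    A ⊆ (⋃ I : Fin n → Fin N, wordMap S (List.ofFn I) '' A) ∧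
      (hataGraph (fun I : Fin n → Fin N => wordMap S (List.ofFn I)) A).Connected := by
  have hword : ∀ (i : Fin N) (m : ℕ) (I : Fin m → Fin N),
      wordMap S (List.ofFn (Fin.cons i I)) = S i ∘ wordMap S (List.ofFn I) := by
    intro i m I
    rw [List.ofFn_succ]
    simp [wordMap, Fin.cons_succ]
  have main : ∀ m : ℕ,
      (A ⊆ ⋃ I : Fin m → Fin N, wordMap S (List.ofFn I) '' A) ∧
      (hataGraph (fun I : Fin m → Fin N => wordMap S (List.ofFn I)) A).Connected := by
    intro m
    induction m with
    | zero =>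
      constructor
      · intro a ha
        refine Set.mem_iUnion.mpr ⟨Fin.elim0, ?_⟩
        simpa [wordMap, List.ofFn_zero] using ha
      · haveI : Nonempty (Fin 0 → Fin N) := ⟨Fin.elim0⟩
        exact SimpleGraph.Connected.mk fun u v => by rw [Subsingleton.elim u v]
    | succ m ih =>
      obtain ⟨ihcov, ihconn⟩ := ih
      set G := hataGraph (fun I : Fin (m + 1) → Fin N => wordMap S (List.ofFn I)) A with hG
      have hcov : A ⊆ ⋃ I : Fin (m + 1) → Fin N, wordMap S (List.ofFn I) '' A := by
        intro a ha
        obtain ⟨i, b, hb, hba⟩ : ∃ i, ∃ b ∈ A, S i b = a := by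
          simpa using hstable ha
        obtain ⟨I, c, hc, hcb⟩ : ∃ I : Fin m → Fin N, ∃ c ∈ A,
            wordMap S (List.ofFn I) c = b := by
          simpa using ihcov hb
        refine Set.mem_iUnion.mpr ⟨Fin.cons i I, c, hc, ?_⟩
        rw [hword]
        simp [hcb, hba]
      refine ⟨hcov, ?_⟩
      have hconsAdj : ∀ (i : Fin N) (I' J' : Fin m → Fin N),
          (hataGraph (fun I : Fin m → Fin N => wordMap S (List.ofFn I)) A).Adj I' J' →
          G.Adj (Fin.cons i I') (Fin.cons i J') := by
        rintro i I' J' ⟨hne, x, hx1, hx2⟩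
        refine ⟨?_, S i x, ?_, ?_⟩
        · intro h
          apply hne
          funext k
          have := congrFun h k.succ
          simpa [Fin.cons_succ] using this
        · show S i x ∈ wordMap S (List.ofFn (Fin.cons i I')) '' A
          rw [hword, Set.image_comp]
          exact Set.mem_image_of_mem _ hx1
        · show S i x ∈ wordMap S (List.ofFn (Fin.cons i J')) '' A
          rw [hword, Set.image_comp]
          exact Set.mem_image_of_mem _ hx2
      have hreach : ∀ (i : Fin N) (I' J' : Fin m → Fin N),
          G.Reachable (Fin.cons i I') (Fin.cons i J') := by
        intro i I' J'
        let hom : (hataGraph (fun I : Fin m → Fin N => wordMap S (List.ofFn I)) A) →g G :=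
          ⟨fun I'' => Fin.cons i I'', fun h => hconsAdj i _ _ h⟩
        exact SimpleGraph.Reachable.map hom (ihconn.preconnected I' J')
      have hbridge : ∀ i j : Fin N, (hataGraph S A).Adj i j →
          ∃ I' J' : Fin m → Fin N, G.Adj (Fin.cons i I') (Fin.cons j J') := by
        rintro i j ⟨hij, x, ⟨a, ha, rfl⟩, b, hb, hx⟩
        obtain ⟨I', ha'⟩ := Set.mem_iUnion.mp (ihcov ha)
        obtain ⟨J', hb'⟩ := Set.mem_iUnion.mp (ihcov hb)
        refine ⟨I', J', ?_, S i a, ?_, ?_⟩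
        · intro h
          have h0 := congrFun h 0
          simp only [Fin.cons_zero] at h0
          exact hij h0
        · show S i a ∈ wordMap S (List.ofFn (Fin.cons i I')) '' A
          rw [hword, Set.image_comp]
          exact Set.mem_image_of_mem _ ha'
        · show S i a ∈ wordMap S (List.ofFn (Fin.cons j J')) '' A
          rw [hword, Set.image_comp, ← hx]
          exact Set.mem_image_of_mem _ hb'
      have key : ∀ (i j : Fin N) (I' J' : Fin m → Fin N),
          G.Reachable (Fin.cons i I') (Fin.cons j J') := by
        intro i j I' J'
        obtain ⟨w⟩ := hconn.preconnected i j
        induction w generalizing I' with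
        | nil => exact hreach _ I' J'
        | cons h p ih =>
          obtain ⟨I'', J'', hadj⟩ := hbridge _ _ h
          exact ((hreach _ I' I'').trans hadj.reachable).trans (ih J'')
      obtain ⟨i0⟩ := hconn.nonempty
      haveI : Nonempty (Fin (m + 1) → Fin N) := ⟨fun _ => i0⟩
      refine SimpleGraph.Connected.mk ?_
      intro P Q
      rw [← Fin.cons_self_tail P, ← Fin.cons_self_tail Q]
      exact key _ _ _ _
  exact main n
end

section
/- Let B be a finite subset of the attractor K of an IFS {S_1,...,S_N} with B ⊆ ⋃_{j=1}^N S_j(B). Then every point x ∈ B admits an eventually periodic coding, i.e., there exists an eventually periodic sequence ω ∈ Σ^ℕ with π(ω) = x. -/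
/-- `cylMap S ω m = S (ω 0) ∘ S (ω 1) ∘ ⋯ ∘ S (ω (m-1))`. -/
def cylMap {E : Type*} {N : ℕ} (S : Fin N → E → E) (ω : ℕ → Fin N) : ℕ → E → E
  | 0 => id
  | m + 1 => cylMap S ω m ∘ S (ω m)

/-- A sequence is eventually periodic. -/
def EvPeriodic {α : Type*} (ω : ℕ → α) : Prop :=
  ∃ p m : ℕ, 1 ≤ m ∧ ∀ k, p ≤ k → ω (k + m) = ω k

theorem stable_finite_set_has_eventually_periodic_coding
    {d N : ℕ}
    (S : Fin N → EuclideanSpace ℝ (Fin d) → EuclideanSpace ℝ (Fin d))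
    (r : Fin N → ℝ)
    (hr : ∀ i, 0 < r i ∧ r i < 1)
    (hsim : ∀ i x y, dist (S i x) (S i y) = r i * dist x y)
    (K : Set (EuclideanSpace ℝ (Fin d)))
    (hKne : K.Nonempty) (hKc : IsCompact K)
    (hKinv : K = ⋃ i, S i '' K)
    (π : (ℕ → Fin N) → EuclideanSpace ℝ (Fin d))
    (hπ : ∀ ω, (⋂ m : ℕ, cylMap S ω (m + 1) '' K) = {π ω})
    (B : Set (EuclideanSpace ℝ (Fin d)))
    (hBK : B ⊆ K) (hBfin : B.Finite)
    (hBstable : B ⊆ ⋃ i, S i '' B) :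
    ∀ x ∈ B, ∃ ω : ℕ → Fin N, EvPeriodic ω ∧ π ω = x := by
  intro x hx
  haveI : Finite B := hBfin.to_subtype
  -- choose for each b ∈ B an index and a preimage in B
  have hf : ∀ b : B, ∃ (i : Fin N) (y : B), S i (y : _) = (b : _) := by
    intro b
    obtain ⟨i, y, hyB, hy⟩ := Set.mem_iUnion.mp (hBstable b.2)
    exact ⟨i, ⟨y, hyB⟩, hy⟩
  choose I Y hIY using hf
  set x0 : B := ⟨x, hx⟩ with hx0
  set seq : ℕ → B := fun k => Y^[k] x0 with hseq
  set ω : ℕ → Fin N := fun k => I (seq k) with hω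
  have hstep : ∀ k, S (ω k) ((seq (k + 1) : _)) = (seq k : _) := by
    intro k
    have : seq (k + 1) = Y (seq k) := Function.iterate_succ_apply' Y k x0
    rw [this]
    exact hIY (seq k)
  have hcyl : ∀ m, cylMap S ω m ((seq m : _)) = x := by
    intro m
    induction m with
    | zero => rfl
    | succ m ih =>
      show cylMap S ω m (S (ω m) (seq (m + 1) : _)) = x
      rw [hstep m, ih]
  -- x is in every cylinder, hence x = π ω
  have hxmem : x ∈ ⋂ m : ℕ, cylMap S ω (m + 1) '' K := by
    refine Set.mem_iInter.mpr fun m => ⟨(seq (m + 1) : _), hBK (seq (m + 1)).2, hcyl (m + 1)⟩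
  have hπx : π ω = x := by
    have := hπ ω ▸ hxmem
    exact (Set.mem_singleton_iff.mp this).symm
  -- eventual periodicity via pigeonhole
  obtain ⟨a, b, hab, heq⟩ :=
    Finite.exists_ne_map_eq_of_infinite (fun k : ℕ => Y^[k] x0)
  rcases hab.lt_or_gt with h | h
  · refine ⟨ω, ⟨a, b - a, by omega, ?_⟩, hπx⟩
    intro k hk
    have hk' : k + (b - a) = (k - a) + b := by omega
    have hk'' : k = (k - a) + a := by omega
    have : seq (k + (b - a)) = seq k := by
      show Y^[k + (b - a)] x0 = Y^[k] x0
      rw [hk', Function.iterate_add_apply, ← heq, ← Function.iterate_add_apply, ← hk'']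
    simp only [hω, this]
  · refine ⟨ω, ⟨b, a - b, by omega, ?_⟩, hπx⟩
    intro k hk
    have hk' : k + (a - b) = (k - b) + a := by omega
    have hk'' : k = (k - b) + b := by omega
    have : seq (k + (a - b)) = seq k := by
      show Y^[k + (a - b)] x0 = Y^[k] x0
      rw [hk', Function.iterate_add_apply, heq, ← Function.iterate_add_apply, ← hk'']
    simp only [hω, this]
end

section
/- Let K be the connected attractor of an IFS {S_1,...,S_N}. If there exists a spanning connected subgraph R of the Hata graph H(K) such that every edge e ∈ R admits a bifurcation pair, then K possesses a skeleton. Conversely, if K possesses a skeleton, then such a spanning graph exists. -/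
lemma cylMap_shift {E : Type*} {N : ℕ} (S : Fin N → E → E) (ω : ℕ → Fin N) :
    ∀ m x, cylMap S ω (m + 1) x = S (ω 0) (cylMap S (fun n => ω (n + 1)) m x) := by
  intro m
  induction m with
  | zero => intro x; rfl
  | succ m ih =>
    intro x
    show cylMap S ω (m + 1) (S (ω (m + 1)) x) = _
    rw [ih]
    rfl

lemma evPeriodic_shift_finite {N : ℕ} {β : Type*} (ω : ℕ → Fin N) (h : EvPeriodic ω)
    (f : (ℕ → Fin N) → β) : {x | ∃ k : ℕ, x = f (fun n => ω (n + k))}.Finite := by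
  obtain ⟨p, m, hm, hper⟩ := h
  have claim : ∀ j n, p ≤ n → ω (n + m * j) = ω n := by
    intro j
    induction j with
    | zero => intro n _; simp
    | succ j ih =>
      intro n hn
      have h1 : n + m * (j + 1) = (n + m * j) + m := by ring
      rw [h1, hper _ (le_trans hn (Nat.le_add_right _ _)), ih n hn]
  have key : ∀ k : ℕ, ∃ k' < p + m, (fun n => ω (n + k)) = (fun n => ω (n + k')) := by
    intro k
    by_cases hk : k < p + m
    · exact ⟨k, hk, rfl⟩
    · push_neg at hk
      set a := (k - p) % m with ha
      have ham : a < m := Nat.mod_lt _ (by omega)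
      refine ⟨p + a, by omega, ?_⟩
      funext n
      have h1 : k = p + (a + m * ((k - p) / m)) := by
        rw [ha, Nat.mod_add_div]; omega
      have h2 : n + k = (n + (p + a)) + m * ((k - p) / m) := by
        conv_lhs => rw [h1]
        ring
      rw [h2, claim _ _ (by omega)]
  have hsub : {x | ∃ k : ℕ, x = f (fun n => ω (n + k))} ⊆
      (fun k' => f (fun n => ω (n + k'))) '' Set.Iio (p + m) := by
    rintro x ⟨k, rfl⟩
    obtain ⟨k', hk', heq⟩ := key k
    exact ⟨k', hk', by rw [heq]⟩
  exact ((Set.finite_Iio _).image _).subset hsub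

theorem skeleton_iff_spanning_graph_with_bifurcation_pairs
    {d N : ℕ}
    (S : Fin N → EuclideanSpace ℝ (Fin d) → EuclideanSpace ℝ (Fin d))
    (r : Fin N → ℝ)
    (hr : ∀ i, 0 < r i ∧ r i < 1)
    (hsim : ∀ i x y, dist (S i x) (S i y) = r i * dist x y)
    (K : Set (EuclideanSpace ℝ (Fin d)))
    (hKne : K.Nonempty) (hKc : IsCompact K)
    (hKconn : IsConnected K)
    (hKinv : K = ⋃ i, S i '' K)
    (π : (ℕ → Fin N) → EuclideanSpace ℝ (Fin d))
    (hπ : ∀ ω, (⋂ m : ℕ, cylMap S ω (m + 1) '' K) = {π ω}) :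
    (∃ A : Set (EuclideanSpace ℝ (Fin d)),
        A ⊆ K ∧ A.Finite ∧ A ⊆ ⋃ i, S i '' A ∧ (hataGraph S A).Connected) ↔
    (∃ R : SimpleGraph (Fin N), R ≤ hataGraph S K ∧ R.Connected ∧
        ∀ i j : Fin N, R.Adj i j →
          ∃ ω γ : ℕ → Fin N, EvPeriodic ω ∧ EvPeriodic γ ∧
            ω 0 = i ∧ γ 0 = j ∧ π ω = π γ) := by
  classical
  have hinj : ∀ i, Function.Injective (S i) := by
    intro i x y hxy
    have h1 := hsim i x y
    rw [hxy, dist_self] at h1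
    rcases mul_eq_zero.mp h1.symm with h | h
    · exact absurd h (ne_of_gt (hr i).1)
    · exact dist_eq_zero.mp h
  have hπK : ∀ ω, π ω ∈ K := by
    intro ω
    have h1 : π ω ∈ ⋂ m : ℕ, cylMap S ω (m + 1) '' K := by
      rw [hπ ω]; exact rfl
    obtain ⟨y, hy, hxy⟩ := Set.mem_iInter.mp h1 0
    rw [hKinv]
    exact Set.mem_iUnion.mpr ⟨ω 0, ⟨y, hy, hxy⟩⟩
  have hπshift : ∀ ω : ℕ → Fin N, π ω = S (ω 0) (π (fun n => ω (n + 1))) := by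
    intro ω
    have h1 : ∀ m : ℕ, π ω ∈ cylMap S ω (m + 1) '' K := by
      intro m
      have h2 : π ω ∈ ⋂ m : ℕ, cylMap S ω (m + 1) '' K := by
        rw [hπ ω]; exact rfl
      exact Set.mem_iInter.mp h2 m
    have h2 : ∀ m : ℕ, ∃ z, z ∈ cylMap S (fun n => ω (n + 1)) (m + 1) '' K ∧
        S (ω 0) z = π ω := by
      intro m
      obtain ⟨y, hy, hxy⟩ := h1 (m + 1)
      refine ⟨cylMap S (fun n => ω (n + 1)) (m + 1) y, ⟨y, hy, rfl⟩, ?_⟩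
      rw [← cylMap_shift S ω (m + 1) y]
      exact hxy
    choose z hz hSz using h2
    have hzeq : ∀ m, z m = z 0 := fun m => hinj (ω 0) (by rw [hSz m, hSz 0])
    have hz0 : z 0 ∈ ⋂ m : ℕ, cylMap S (fun n => ω (n + 1)) (m + 1) '' K := by
      refine Set.mem_iInter.mpr fun m => ?_
      rw [← hzeq m]; exact hz m
    rw [hπ, Set.mem_singleton_iff] at hz0
    rw [← hz0]
    exact (hSz 0).symm
  constructor
  · -- skeleton → spanning graph
    rintro ⟨A, hAK, hAfin, hAsub, hAconn⟩
    refine ⟨hataGraph S A, ?_, hAconn, ?_⟩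
    · intro i j hij
      exact ⟨hij.1, Set.Nonempty.mono
        (Set.inter_subset_inter (Set.image_mono hAK) (Set.image_mono hAK)) hij.2⟩
    · haveI : Nonempty (Fin N) := hAconn.nonempty
      have hch : ∀ a ∈ A, ∃ i : Fin N, ∃ b, b ∈ A ∧ S i b = a := by
        intro a ha
        obtain ⟨i, hmem⟩ := Set.mem_iUnion.mp (hAsub ha)
        obtain ⟨b, hb, hba⟩ := hmem
        exact ⟨i, b, hb, hba⟩
      choose! σf τf hτA hτS using hch
      have key : ∀ (i : Fin N) (a : EuclideanSpace ℝ (Fin d)), a ∈ A →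
          ∃ ω : ℕ → Fin N, EvPeriodic ω ∧ ω 0 = i ∧ π ω = S i a := by
        intro i a ha
        set ω : ℕ → Fin N := fun n => match n with
          | 0 => i
          | Nat.succ k => σf (τf^[k] a) with hωdef
        have hiter : ∀ n, τf^[n] a ∈ A := by
          intro n
          induction n with
          | zero => simpa using ha
          | succ n ih => rw [Function.iterate_succ_apply']; exact hτA _ ih
        have hcyl : ∀ m, cylMap S ω (m + 1) (τf^[m] a) = S i a := by
          intro m
          induction m with
          | zero => rfl
          | succ m ih =>
            show cylMap S ω (m + 1) (S (ω (m + 1)) (τf^[m + 1] a)) = S i a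
            have h3 : S (ω (m + 1)) (τf^[m + 1] a) = τf^[m] a := by
              show S (σf (τf^[m] a)) (τf^[m + 1] a) = τf^[m] a
              rw [Function.iterate_succ_apply']
              exact hτS _ (hiter m)
            rw [h3]; exact ih
        have hmem : S i a ∈ ⋂ m : ℕ, cylMap S ω (m + 1) '' K :=
          Set.mem_iInter.mpr fun m => ⟨τf^[m] a, hAK (hiter m), hcyl m⟩
        rw [hπ ω, Set.mem_singleton_iff] at hmem
        have hnotinj : ¬ Function.Injective (fun n : ℕ => τf^[n] a) := by
          intro hi
          exact (Set.infinite_range_of_injective hi)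
            (hAfin.subset (Set.range_subset_iff.mpr hiter))
        obtain ⟨p, q, hpq, heq2⟩ : ∃ p q : ℕ, p < q ∧ τf^[p] a = τf^[q] a := by
          obtain ⟨p', q', heqv, hne⟩ := Function.not_injective_iff.mp hnotinj
          rcases hne.lt_or_gt with h | h
          · exact ⟨p', q', h, heqv⟩
          · exact ⟨q', p', h, heqv.symm⟩
        have hperiter : ∀ k, p ≤ k → τf^[k + (q - p)] a = τf^[k] a := by
          intro k hk
          induction k, hk using Nat.le_induction with
          | base =>
            have h4 : p + (q - p) = q := by omega
            rw [h4]; exact heq2.symm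
          | succ k hk ih =>
            have h4 : k + 1 + (q - p) = (k + (q - p)) + 1 := by omega
            rw [h4, Function.iterate_succ_apply', Function.iterate_succ_apply', ih]
        refine ⟨ω, ⟨p + 1, q - p, by omega, ?_⟩, rfl, hmem.symm⟩
        intro k hk
        obtain ⟨k', rfl⟩ : ∃ k'', k = k'' + 1 := ⟨k - 1, by omega⟩
        have h4 : k' + 1 + (q - p) = (k' + (q - p)) + 1 := by omega
        rw [h4]
        show σf (τf^[k' + (q - p)] a) = σf (τf^[k'] a)
        rw [hperiter k' (by omega)]
      intro i j hij
      obtain ⟨x, hxi, hxj⟩ := hij.2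
      obtain ⟨a, ha, hax⟩ := hxi
      obtain ⟨b, hb, hbx⟩ := hxj
      obtain ⟨ω, hω1, hω2, hω3⟩ := key i a ha
      obtain ⟨γ, hγ1, hγ2, hγ3⟩ := key j b hb
      exact ⟨ω, γ, hω1, hγ1, hω2, hγ2, by rw [hω3, hγ3, hax, hbx]⟩
  · -- spanning graph → skeleton
    rintro ⟨R, hRle, hRconn, hRbif⟩
    choose! ωf γf hω hγ hω0 hγ0 hπeq using hRbif
    set orb : (ℕ → Fin N) → Set (EuclideanSpace ℝ (Fin d)) :=
      fun ω => {x | ∃ k : ℕ, x = π (fun n => ω (n + k))} with horb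
    set A : Set (EuclideanSpace ℝ (Fin d)) :=
      ⋃ i : Fin N, ⋃ j : Fin N, ⋃ (_ : R.Adj i j), (orb (ωf i j) ∪ orb (γf i j)) with hA
    have horbmem : ∀ ω : ℕ → Fin N, ∀ k : ℕ, π (fun n => ω (n + k)) ∈ orb ω :=
      fun ω k => ⟨k, rfl⟩
    have horbsubA : ∀ i j, R.Adj i j → orb (ωf i j) ∪ orb (γf i j) ⊆ A := by
      intro i j hij x hx
      exact Set.mem_iUnion.mpr ⟨i, Set.mem_iUnion.mpr ⟨j, Set.mem_iUnion.mpr ⟨hij, hx⟩⟩⟩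
    have hAK : A ⊆ K := by
      rintro x hx
      obtain ⟨_, ⟨i, rfl⟩, _, ⟨j, rfl⟩, _, ⟨hij, rfl⟩, hx⟩ := hx
      rcases hx with ⟨k, rfl⟩ | ⟨k, rfl⟩ <;> exact hπK _
    have horbshift : ∀ (ω : ℕ → Fin N) (k : ℕ),
        π (fun n => ω (n + k)) = S (ω k) (π (fun n => ω (n + (k + 1)))) := by
      intro ω k
      have h1 := hπshift (fun n => ω (n + k))
      have h2 : (fun n => ω (n + 1 + k)) = (fun n => ω (n + (k + 1))) := by
        funext n; congr 1; omega
      simpa [h2] using h1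
    refine ⟨A, hAK, ?_, ?_, ?_⟩
    · refine Set.finite_iUnion fun i => Set.finite_iUnion fun j => Set.finite_iUnion fun hij => ?_
      exact (evPeriodic_shift_finite _ (hω i j hij) π).union
        (evPeriodic_shift_finite _ (hγ i j hij) π)
    · rintro x hx
      obtain ⟨_, ⟨i, rfl⟩, _, ⟨j, rfl⟩, _, ⟨hij, rfl⟩, hx⟩ := hx
      rcases hx with ⟨k, rfl⟩ | ⟨k, rfl⟩
      · refine Set.mem_iUnion.mpr ⟨ωf i j k, ?_⟩
        rw [horbshift (ωf i j) k]
        exact ⟨_, horbsubA i j hij (Or.inl (horbmem _ (k + 1))), rfl⟩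
      · refine Set.mem_iUnion.mpr ⟨γf i j k, ?_⟩
        rw [horbshift (γf i j) k]
        exact ⟨_, horbsubA i j hij (Or.inr (horbmem _ (k + 1))), rfl⟩
    · have hRleA : R ≤ hataGraph S A := by
        intro i j hij
        refine ⟨(hRle hij).1, ⟨π (ωf i j), ?_, ?_⟩⟩
        · have h1 := hπshift (ωf i j)
          rw [hω0 i j hij] at h1
          exact ⟨π (fun n => ωf i j (n + 1)),
            horbsubA i j hij (Or.inl (horbmem _ 1)), h1.symm⟩
        · have h1 := hπshift (γf i j)
          rw [hγ0 i j hij] at h1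
          rw [hπeq i j hij, h1]
          exact ⟨π (fun n => γf i j (n + 1)),
            horbsubA i j hij (Or.inr (horbmem _ 1)), rfl⟩
      exact hRconn.mono hRleA
end

section
/- Let e = {S_i, S_j} be an edge of the Hata graph H(K) with bifurcation pair {ω, γ}. Then the set A = π(B), where B is the union of the shift-orbits {σ^k(ω) : k ∈ ℕ} ∪ {σ^k(γ) : k ∈ ℕ}, is a finite subset of K satisfying A ⊆ ⋃_{j=1}^N S_j(A), and S_i(A) ∩ S_j(A) ≠ ∅. -/
/-- The left shift on sequences. -/
def shift {α : Type*} (ω : ℕ → α) : ℕ → α := fun n => ω (n + 1)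

lemma shift_iter {α : Type*} (ω : ℕ → α) : ∀ k n, shift^[k] ω n = ω (n + k)
  | 0, n => rfl
  | k+1, n => by
    rw [Function.iterate_succ_apply, shift_iter (shift ω) k n]
    show ω (n + k + 1) = ω (n + (k + 1))
    ring_nf

lemma cylMap_succ' {E : Type*} {N : ℕ} (S : Fin N → E → E) (ω : ℕ → Fin N) :
    ∀ m, cylMap S ω (m + 1) = S (ω 0) ∘ cylMap S (shift ω) m
  | 0 => rfl
  | m + 1 => by
    show cylMap S ω (m + 1) ∘ S (ω (m + 1)) = _
    rw [cylMap_succ' S ω m]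
    rfl

lemma orbit_finite {α : Type*} (ω : ℕ → α) (h : EvPeriodic ω) :
    {ω' | ∃ k, shift^[k] ω = ω'}.Finite := by
  obtain ⟨p, m, hm, hper⟩ := h
  have key : ∀ k, p ≤ k → shift^[k + m] ω = shift^[k] ω := by
    intro k hk
    funext n
    rw [shift_iter, shift_iter, ← add_assoc]
    exact hper (n + k) (by omega)
  have hsub : {ω' | ∃ k, shift^[k] ω = ω'} ⊆ (fun k => shift^[k] ω) '' Set.Iio (p + m) := by
    rintro ω' ⟨k, hk⟩
    subst hk
    induction k using Nat.strong_induction_on with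
    | _ k ih =>
      by_cases hlt : k < p + m
      · exact ⟨k, hlt, rfl⟩
      · push_neg at hlt
        have h1 : p ≤ k - m := by omega
        have h2 : k - m + m = k := by omega
        have h3 := key (k - m) h1
        rw [h2] at h3
        rw [h3]
        exact ih (k - m) (by omega)
  exact ((Set.finite_Iio _).image _).subset hsub

theorem bifurcation_pair_orbit_set
    {d N : ℕ}
    (S : Fin N → EuclideanSpace ℝ (Fin d) → EuclideanSpace ℝ (Fin d))
    (r : Fin N → ℝ)
    (hr : ∀ i, 0 < r i ∧ r i < 1)
    (hsim : ∀ i x y, dist (S i x) (S i y) = r i * dist x y)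
    (K : Set (EuclideanSpace ℝ (Fin d)))
    (hKne : K.Nonempty) (hKc : IsCompact K)
    (hKinv : K = ⋃ i, S i '' K)
    (π : (ℕ → Fin N) → EuclideanSpace ℝ (Fin d))
    (hπ : ∀ ω', (⋂ m : ℕ, cylMap S ω' (m + 1) '' K) = {π ω'})
    (i j : Fin N) (hij : i ≠ j)
    (hedge : (S i '' K ∩ S j '' K).Nonempty)
    (ω γ : ℕ → Fin N)
    (hωp : EvPeriodic ω) (hγp : EvPeriodic γ)
    (hω0 : ω 0 = i) (hγ0 : γ 0 = j) (hπωγ : π ω = π γ) :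
    (π '' ({ω' | ∃ k : ℕ, shift^[k] ω = ω'} ∪ {ω' | ∃ k : ℕ, shift^[k] γ = ω'})).Finite ∧
    (π '' ({ω' | ∃ k : ℕ, shift^[k] ω = ω'} ∪ {ω' | ∃ k : ℕ, shift^[k] γ = ω'})) ⊆ K ∧
    (π '' ({ω' | ∃ k : ℕ, shift^[k] ω = ω'} ∪ {ω' | ∃ k : ℕ, shift^[k] γ = ω'})) ⊆
      ⋃ l, S l '' (π '' ({ω' | ∃ k : ℕ, shift^[k] ω = ω'} ∪ {ω' | ∃ k : ℕ, shift^[k] γ = ω'})) ∧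
    (S i '' (π '' ({ω' | ∃ k : ℕ, shift^[k] ω = ω'} ∪ {ω' | ∃ k : ℕ, shift^[k] γ = ω'})) ∩
      S j '' (π '' ({ω' | ∃ k : ℕ, shift^[k] ω = ω'} ∪ {ω' | ∃ k : ℕ, shift^[k] γ = ω'}))).Nonempty := by
  have hmemInt : ∀ ω', π ω' ∈ ⋂ m : ℕ, cylMap S ω' (m + 1) '' K := by
    intro ω'
    rw [hπ]
    exact Set.mem_singleton _
  have hmemK : ∀ ω', π ω' ∈ K := by
    intro ω'
    have h2 := Set.mem_iInter.1 (hmemInt ω') 0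
    obtain ⟨x, hx, hxe⟩ := h2
    rw [hKinv]
    exact Set.mem_iUnion.2 ⟨ω' 0, x, hx, by simpa [cylMap] using hxe⟩
  have hshift : ∀ ω', π ω' = S (ω' 0) (π (shift ω')) := by
    intro ω'
    have hmem : S (ω' 0) (π (shift ω')) ∈ ⋂ m : ℕ, cylMap S ω' (m + 1) '' K := by
      refine Set.mem_iInter.2 fun m => ?_
      cases m with
      | zero => exact ⟨π (shift ω'), hmemK _, rfl⟩
      | succ m =>
        obtain ⟨x, hx, hxe⟩ := Set.mem_iInter.1 (hmemInt (shift ω')) m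
        refine ⟨x, hx, ?_⟩
        rw [cylMap_succ']
        simp only [Function.comp_apply, hxe]
    have h := (hπ ω') ▸ hmem
    exact (Set.mem_singleton_iff.1 h).symm
  set B : Set (ℕ → Fin N) :=
    {ω' | ∃ k : ℕ, shift^[k] ω = ω'} ∪ {ω' | ∃ k : ℕ, shift^[k] γ = ω'} with hB
  have hshiftB : ∀ ω' ∈ B, shift ω' ∈ B := by
    rintro ω' (⟨k, hk⟩ | ⟨k, hk⟩)
    · exact Or.inl ⟨k + 1, by rw [Function.iterate_succ_apply', hk]⟩
    · exact Or.inr ⟨k + 1, by rw [Function.iterate_succ_apply', hk]⟩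
  refine ⟨((orbit_finite ω hωp).union (orbit_finite γ hγp)).image π, ?_, ?_, ?_⟩
  · rintro x ⟨ω', _, rfl⟩
    exact hmemK ω'
  · rintro x ⟨ω', hω', rfl⟩
    exact Set.mem_iUnion.2 ⟨ω' 0, π (shift ω'), ⟨shift ω', hshiftB ω' hω', rfl⟩,
      (hshift ω').symm⟩
  · refine ⟨π ω, ⟨π (shift ω), ⟨shift ω, Or.inl ⟨1, rfl⟩, rfl⟩, ?_⟩,
      ⟨π (shift γ), ⟨shift γ, Or.inr ⟨1, rfl⟩, rfl⟩, ?_⟩⟩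
    · rw [← hω0]; exact (hshift ω).symm
    · rw [← hγ0, hπωγ]; exact (hshift γ).symm
end

section
/- Let K be the attractor of the IFS S_i(z) = (z + d_i)/3 on ℂ, with digits D = {0, 1, 2, i, 1+i, 2+i, ε+2i, ε+1+2i, ε+2+2i} where ε = √2/4. Then K possesses no skeleton. -/
open Complex

/-- Kenyon's digit set with `ε = √2/4`. -/
noncomputable def kenyonD : Fin 9 → ℂ :=
  ![0, 1, 2, I, 1 + I, 2 + I,
    (Real.sqrt 2 / 4 : ℝ) + 2 * I,
    (Real.sqrt 2 / 4 : ℝ) + 1 + 2 * I,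
    (Real.sqrt 2 / 4 : ℝ) + 2 + 2 * I]

/-- The maps of Kenyon's IFS: `S i z = (z + d i) / 3`. -/
noncomputable def kenyonS : Fin 9 → ℂ → ℂ := fun i z => (z + kenyonD i) / 3

/-- Complete case analysis on the digits: each digit has imaginary part `0`, `1` or `2`;
in the first two cases its real part is rational, in the last it is `√2/4` plus a rational. -/
lemma kenyonD_cases (j : Fin 9) :
    ((kenyonD j).im = 0 ∧ ∃ e : ℚ, (kenyonD j).re = e) ∨
    ((kenyonD j).im = 1 ∧ ∃ e : ℚ, (kenyonD j).re = e) ∨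
    ((kenyonD j).im = 2 ∧ ∃ e : ℚ, (kenyonD j).re = Real.sqrt 2 / 4 + e) := by
  have h0 : kenyonD ⟨0, by omega⟩ = 0 := rfl
  have h1 : kenyonD ⟨1, by omega⟩ = 1 := rfl
  have h2 : kenyonD ⟨2, by omega⟩ = 2 := rfl
  have h3 : kenyonD ⟨3, by omega⟩ = I := rfl
  have h4 : kenyonD ⟨4, by omega⟩ = 1 + I := rfl
  have h5 : kenyonD ⟨5, by omega⟩ = 2 + I := rfl
  have h6 : kenyonD ⟨6, by omega⟩ = (Real.sqrt 2 / 4 : ℝ) + 2 * I := rfl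
  have h7 : kenyonD ⟨7, by omega⟩ = (Real.sqrt 2 / 4 : ℝ) + 1 + 2 * I := rfl
  have h8 : kenyonD ⟨8, by omega⟩ = (Real.sqrt 2 / 4 : ℝ) + 2 + 2 * I := rfl
  fin_cases j
  · exact .inl ⟨by rw [h0]; simp, 0, by rw [h0]; simp⟩
  · exact .inl ⟨by rw [h1]; simp, 1, by rw [h1]; simp⟩
  · exact .inl ⟨by rw [h2]; simp, 2, by rw [h2]; norm_num⟩
  · exact .inr <| .inl ⟨by rw [h3]; simp, 0, by rw [h3]; simp⟩
  · exact .inr <| .inl ⟨by rw [h4]; simp, 1, by rw [h4]; simp⟩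
  · exact .inr <| .inl ⟨by rw [h5]; simp, 2, by rw [h5]; norm_num⟩
  · exact .inr <| .inr ⟨by rw [h6]; simp, 0, by rw [h6]; simp⟩
  · exact .inr <| .inr ⟨by rw [h7]; simp, 1, by rw [h7]; norm_num⟩
  · exact .inr <| .inr ⟨by rw [h8]; simp, 2, by rw [h8]; norm_num⟩

lemma kenyonD_im_nonneg (j : Fin 9) : 0 ≤ (kenyonD j).im := by
  rcases kenyonD_cases j with ⟨h, -⟩ | ⟨h, -⟩ | ⟨h, -⟩ <;> rw [h] <;> norm_num

lemma kenyonD_im_le_two (j : Fin 9) : (kenyonD j).im ≤ 2 := by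
  rcases kenyonD_cases j with ⟨h, -⟩ | ⟨h, -⟩ | ⟨h, -⟩ <;> rw [h] <;> norm_num

/-- The basic algebraic relation for a preimage under one of the maps. -/
lemma kenyonS_rel {j : Fin 9} {w z : ℂ} (h : kenyonS j w = z) :
    w.re = 3 * z.re - (kenyonD j).re ∧ w.im = 3 * z.im - (kenyonD j).im := by
  have h3 : w + kenyonD j = 3 * z := by
    have : (w + kenyonD j) / 3 = z := h
    field_simp at this
    linear_combination this
  have hre := congrArg Complex.re h3
  have him := congrArg Complex.im h3
  simp [Complex.add_re, Complex.add_im, Complex.mul_re, Complex.mul_im] at hre him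
  constructor <;> linarith

/-- A finite set of reals closed under `x ↦ 3x - (rational)` consists of rationals. -/
lemma rat_trap (S : Set ℝ) (hS : S.Finite)
    (h : ∀ x ∈ S, ∃ y ∈ S, ∃ q : ℚ, y = 3 * x - q) :
    ∀ x ∈ S, ∃ q : ℚ, x = (q : ℝ) := by
  haveI : Finite S := hS
  choose f hf q hq using fun s : S => h s s.2
  set F : S → S := fun s => ⟨f s, hf s⟩ with hF
  have key : ∀ n : ℕ, ∀ s : S, ∃ c : ℚ, ((F^[n] s : S) : ℝ) = 3 ^ n * s - c := by
    intro n
    induction n with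
    | zero => intro s; exact ⟨0, by simp⟩
    | succ n ih =>
      intro s
      obtain ⟨c, hc⟩ := ih (F s)
      refine ⟨3 ^ n * q s + c, ?_⟩
      rw [Function.iterate_succ_apply, hc]
      have hFs : ((F s : S) : ℝ) = 3 * s - q s := hq s
      rw [hFs]
      push_cast
      ring
  intro x hx
  obtain ⟨m, n, hmn, heq⟩ := Finite.exists_ne_map_eq_of_infinite (fun k => F^[k] ⟨x, hx⟩)
  rcases hmn.lt_or_gt with hlt | hlt
  all_goals {
    obtain ⟨c₁, hc₁⟩ := key m ⟨x, hx⟩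
    obtain ⟨c₂, hc₂⟩ := key n ⟨x, hx⟩
    rw [heq] at hc₁
    have hxx : ((3:ℝ) ^ n - 3 ^ m) * x = c₂ - c₁ := by
      rw [hc₂] at hc₁; linarith
    have hne : ((3:ℚ) ^ n - 3 ^ m) ≠ 0 := by
      have := pow_lt_pow_right₀ (by norm_num : (1:ℚ) < 3) (show min m n < max m n by omega)
      rcases le_total m n with h' | h' <;>
        simp_all [min_eq_left, max_eq_right, min_eq_right, max_eq_left] <;> nlinarith
    refine ⟨(c₂ - c₁) / (3 ^ n - 3 ^ m), ?_⟩
    have hne' : ((3:ℝ) ^ n - 3 ^ m) ≠ 0 := by exact_mod_cast hne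
    push_cast
    field_simp
    linarith
  }

/-- Any compact set invariant for Kenyon's IFS lies in the strip `0 ≤ Im z ≤ 1`. -/
lemma kenyon_im_bounds (K : Set ℂ) (hKne : K.Nonempty) (hKc : IsCompact K)
    (hKinv : K = ⋃ i, kenyonS i '' K) :
    ∀ z ∈ K, 0 ≤ z.im ∧ z.im ≤ 1 := by
  have hTc : IsCompact (Complex.im '' K) := hKc.image Complex.continuous_im
  have hTne : (Complex.im '' K).Nonempty := hKne.image _
  -- upper bound
  have hub : sSup (Complex.im '' K) ≤ 1 := by
    obtain ⟨z, hzK, hz⟩ := hTc.sSup_mem hTne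
    have : z ∈ ⋃ i, kenyonS i '' K := hKinv ▸ hzK
    obtain ⟨i, w, hwK, hw⟩ := by simpa using this
    have hrel := (kenyonS_rel hw).2
    have hwle : w.im ≤ sSup (Complex.im '' K) := le_csSup hTc.bddAbove ⟨w, hwK, rfl⟩
    have hd := kenyonD_im_le_two i
    linarith
  have hlb : 0 ≤ sInf (Complex.im '' K) := by
    obtain ⟨z, hzK, hz⟩ := hTc.sInf_mem hTne
    have : z ∈ ⋃ i, kenyonS i '' K := hKinv ▸ hzK
    obtain ⟨i, w, hwK, hw⟩ := by simpa using this
    have hrel := (kenyonS_rel hw).2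
    have hwge : sInf (Complex.im '' K) ≤ w.im := csInf_le hTc.bddBelow ⟨w, hwK, rfl⟩
    have hd := kenyonD_im_nonneg i
    linarith
  intro z hz
  constructor
  · exact le_trans hlb (csInf_le hTc.bddBelow ⟨z, hz, rfl⟩)
  · exact le_trans (le_csSup hTc.bddAbove ⟨z, hz, rfl⟩) hub

theorem kenyon_reptile_has_no_skeleton
    (K : Set ℂ)
    (hKne : K.Nonempty) (hKc : IsCompact K)
    (hKinv : K = ⋃ i, kenyonS i '' K) :
    ¬ ∃ A : Set ℂ, A ⊆ K ∧ A.Finite ∧ A ⊆ ⋃ i, kenyonS i '' A ∧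
        (hataGraph kenyonS A).Connected := by
  rintro ⟨A, hAK, hAfin, hAsub, hconn⟩
  have hbound := kenyon_im_bounds K hKne hKc hKinv
  have hboundA : ∀ a ∈ A, 0 ≤ a.im ∧ a.im ≤ 1 := fun a ha => hbound a (hAK ha)
  -- every point of A has a preimage in A
  have step : ∀ a ∈ A, ∃ j : Fin 9, ∃ a' ∈ A, kenyonS j a' = a := by
    intro a ha
    obtain ⟨j, a', ha'A, ha'⟩ := by simpa using hAsub ha
    exact ⟨j, a', ha'A, ha'⟩
  -- the two slices
  set S₁ : Set ℝ := (fun z : ℂ => z.re - Real.sqrt 2 / 8) '' {a ∈ A | a.im = 1} with hS₁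
  set S₀ : Set ℝ := Complex.re '' {a ∈ A | a.im = 0} with hS₀
  have hS₁fin : S₁.Finite := (hAfin.sep _).image _
  have hS₀fin : S₀.Finite := (hAfin.sep _).image _
  -- closure properties
  have htrap₁ : ∀ x ∈ S₁, ∃ y ∈ S₁, ∃ q : ℚ, y = 3 * x - q := by
    rintro x ⟨a, ⟨haA, haim⟩, rfl⟩
    obtain ⟨j, a', ha'A, ha'⟩ := step a haA
    obtain ⟨hre, him⟩ := kenyonS_rel ha'
    obtain ⟨h0, h1⟩ := hboundA a' ha'A
    rcases kenyonD_cases j with ⟨hd, -⟩ | ⟨hd, -⟩ | ⟨hd, e, hdre⟩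
    · rw [haim, hd] at him; linarith
    · rw [haim, hd] at him; linarith
    · refine ⟨a'.re - Real.sqrt 2 / 8, ⟨a', ⟨ha'A, by rw [him, haim, hd]; ring⟩, rfl⟩, e, ?_⟩
      rw [hre, hdre]; ring
  have htrap₀ : ∀ x ∈ S₀, ∃ y ∈ S₀, ∃ q : ℚ, y = 3 * x - q := by
    rintro x ⟨a, ⟨haA, haim⟩, rfl⟩
    obtain ⟨j, a', ha'A, ha'⟩ := step a haA
    obtain ⟨hre, him⟩ := kenyonS_rel ha'
    obtain ⟨h0, h1⟩ := hboundA a' ha'A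
    rcases kenyonD_cases j with ⟨hd, e, hdre⟩ | ⟨hd, -⟩ | ⟨hd, -⟩
    · refine ⟨a'.re, ⟨a', ⟨ha'A, by rw [him, haim, hd]; ring⟩, rfl⟩, e, ?_⟩
      rw [hre, hdre]
    · rw [haim, hd] at him; linarith
    · rw [haim, hd] at him; linarith
  have hrat₁ := rat_trap S₁ hS₁fin htrap₁
  have hrat₀ := rat_trap S₀ hS₀fin htrap₀
  -- a boundary edge of the Hata graph
  have hk0 : (kenyonD 0).im = 0 := by rw [show kenyonD 0 = 0 from rfl]; simp
  have hk6 : (kenyonD 6).im = 2 := by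
    rw [show kenyonD 6 = (Real.sqrt 2 / 4 : ℝ) + 2 * I from rfl]; simp
  set P : Set (Fin 9) := {i | (kenyonD i).im ≤ 1} with hP
  have h0P : (0 : Fin 9) ∈ P := by simp [hP, hk0]
  have h6P : (6 : Fin 9) ∉ P := by simp [hP, hk6]
  obtain ⟨p⟩ := hconn.preconnected 0 6
  obtain ⟨d, -, hdP, hdnP⟩ := p.exists_boundary_dart P h0P h6P
  obtain ⟨-, z, ⟨a, haA, ha⟩, b, hbA, hb⟩ := d.adj
  -- a + d_i = b + d_j
  have hab : a + kenyonD d.fst = b + kenyonD d.snd := by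
    have h1 : (a + kenyonD d.fst) / 3 = z := ha
    have h2 : (b + kenyonD d.snd) / 3 = z := hb
    have := h1.trans h2.symm
    field_simp at this
    linear_combination this
  have habre : a.re + (kenyonD d.fst).re = b.re + (kenyonD d.snd).re := by
    have := congrArg Complex.re hab; simpa using this
  have habim : a.im + (kenyonD d.fst).im = b.im + (kenyonD d.snd).im := by
    have := congrArg Complex.im hab; simpa using this
  obtain ⟨ha0, ha1⟩ := hboundA a haA
  obtain ⟨hb0, hb1⟩ := hboundA b hbA
  -- d.snd is a top-row digit
  rcases kenyonD_cases d.snd with ⟨hd, -⟩ | ⟨hd, -⟩ | ⟨hd, ej, hdre⟩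
  · exact hdnP (by simp [hP, hd])
  · exact hdnP (by simp [hP, hd])
  -- d.fst is a middle-row digit
  rcases kenyonD_cases d.fst with ⟨hd', -⟩ | ⟨hd', ei, hdre'⟩ | ⟨hd', -⟩
  · rw [hd, hd'] at habim; linarith
  swap
  · exact absurd hdP (by simp [hP, hd'])
  -- so a.im = 1 and b.im = 0
  rw [hd, hd'] at habim
  have haim : a.im = 1 := by linarith
  have hbim : b.im = 0 := by linarith
  -- rationality of the real parts
  obtain ⟨qa, hqa⟩ := hrat₁ (a.re - Real.sqrt 2 / 8) ⟨a, ⟨haA, haim⟩, rfl⟩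
  obtain ⟨qb, hqb⟩ := hrat₀ b.re ⟨b, ⟨hbA, hbim⟩, rfl⟩
  -- contradiction with irrationality of √2
  rw [hdre, hdre'] at habre
  have hsqrt : Real.sqrt 2 = ((8 * (qa + ei - qb - ej) : ℚ) : ℝ) := by
    push_cast
    linarith
  exact irrational_sqrt_two ⟨8 * (qa + ei - qb - ej), hsqrt.symm⟩
end

section
/- Let K be the attractor of S_i(z) = (z+d_i)/3 with digits D = {0, 1, 2, i, 1+i, 2+i, ε+2i, ε+1+2i, ε+2+2i}, ε = √2/4. If a point z ∈ ℂ with imaginary part 1/3 has two codings (digit expansions z = Σ_{k≥1} 3^{-k} a_k = Σ_{k≥1} 3^{-k} b_k with a_k, b_k ∈ D), where Im(a_1) = 0 and Im(b_1) = 1, and both digit sequences are eventually periodic, then a contradiction follows; i.e., no such point with two eventually periodic codings exists. -/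
set_option maxHeartbeats 1000000


open Complex

/- ### Auxiliary lemmas -/

lemma my_summable_aux (x : ℕ → ℝ) (hb : ∀ k, |x k| ≤ 3) :
    Summable (fun k => x k / 3 ^ (k + 1)) := by
  have hg0 : Summable (fun k : ℕ => ((1:ℝ)/3) ^ k) :=
    summable_geometric_of_lt_one (by norm_num) (by norm_num)
  have hg1 : Summable (fun k : ℕ => ((1:ℝ)/3) ^ (k + 1)) :=
    (summable_nat_add_iff 1).mpr hg0
  have hg : Summable (fun k : ℕ => 3 * ((1:ℝ)/3) ^ (k + 1)) := hg1.mul_left 3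
  refine Summable.of_norm_bounded hg (fun k => ?_)
  have h1 : ‖x k / 3 ^ (k+1)‖ = |x k| * (1/3 : ℝ)^(k+1) := by
    have h2 : |(3:ℝ)^(k+1)| = 3^(k+1) := abs_of_nonneg (by positivity)
    rw [Real.norm_eq_abs, abs_div, h2, div_eq_mul_inv, ← inv_pow]
    norm_num
  rw [h1]
  gcongr
  exact hb k

lemma my_geo1 : ∑' k : ℕ, ((1:ℝ)/3) ^ (k+1) = 1/2 := by
  simp only [pow_succ]
  rw [tsum_mul_right, tsum_geometric_of_lt_one (by norm_num) (by norm_num)]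
  norm_num

lemma my_geo2 : ∑' k : ℕ, ((1:ℝ)/3) ^ (k+2) = 1/6 := by
  simp only [pow_add]
  rw [tsum_mul_right, tsum_geometric_of_lt_one (by norm_num) (by norm_num)]
  norm_num

open Finset in
lemma my_rat_tsum (x : ℕ → ℝ) (hb : ∀ k, |x k| ≤ 3)
    (hq : ∀ k, ∃ q : ℚ, x k = (q : ℝ)) (p m : ℕ) (hm : 1 ≤ m)
    (hper : ∀ k, p ≤ k → x (k + m) = x k) :
    ∃ q : ℚ, ∑' k : ℕ, x k / 3 ^ (k + 1) = (q : ℝ) := by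
  choose q hqx using hq
  set g : ℕ → ℝ := fun k => x k / 3 ^ (k + 1) with hg
  have hs : Summable g := my_summable_aux x hb
  have hsp : Summable (fun k => g (k + p)) := (summable_nat_add_iff p).mpr hs
  set T : ℝ := ∑' k, g (k + p) with hT
  have h1 : ∑' k, g k = (∑ i ∈ range p, g i) + T := (Summable.sum_add_tsum_nat_add p hs).symm
  have h2 : ∀ k : ℕ, g (k + m + p) = g (k + p) * (1/3 : ℝ) ^ m := by
    intro k
    have hx : x (k + m + p) = x (k + p) := by
      have := hper (k + p) (Nat.le_add_left _ _)
      rwa [show k + p + m = k + m + p from by omega] at this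
    simp only [hg]
    rw [hx, show k + m + p + 1 = (k + p + 1) + m from by omega, pow_add]
    field_simp
    rw [mul_assoc, ← mul_pow]; norm_num
  have h3 : T = (∑ i ∈ range m, g (i + p)) + T * (1/3 : ℝ) ^ m := by
    have h4 := (Summable.sum_add_tsum_nat_add m hsp)
    have h5 : ∑' (i : ℕ), g (i + m + p) = T * (1/3 : ℝ) ^ m := by
      rw [tsum_congr h2, tsum_mul_right]
    rw [h5, ← hT] at h4; linarith
  have hne : (1 - (1/3 : ℝ) ^ m) ≠ 0 := by
    have : (1/3 : ℝ) ^ m < 1 := pow_lt_one₀ (by norm_num) (by norm_num) (by omega)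
    linarith
  have hTval : T = (∑ i ∈ range m, g (i + p)) / (1 - (1/3 : ℝ) ^ m) := by
    rw [eq_div_iff hne]; linarith [h3]
  have hP : (∑ i ∈ range p, g i) = ((∑ i ∈ range p, q i / 3 ^ (i + 1) : ℚ) : ℝ) := by
    push_cast
    exact Finset.sum_congr rfl fun i _ => by simp only [hg]; rw [hqx i]
  have hF : (∑ i ∈ range m, g (i + p)) = ((∑ i ∈ range m, q (i + p) / 3 ^ (i + p + 1) : ℚ) : ℝ) := by
    push_cast
    exact Finset.sum_congr rfl fun i _ => by simp only [hg]; rw [hqx (i + p)]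
  refine ⟨(∑ i ∈ range p, q i / 3 ^ (i + 1)) +
      (∑ i ∈ range m, q (i + p) / 3 ^ (i + p + 1)) / (1 - (1/3 : ℚ) ^ m), ?_⟩
  rw [h1, hTval, hP, hF]
  push_cast
  ring

lemma my_kD0 : kenyonD 0 = 0 := rfl
lemma my_kD1 : kenyonD 1 = 1 := rfl
lemma my_kD2 : kenyonD 2 = 2 := rfl
lemma my_kD3 : kenyonD 3 = I := rfl
lemma my_kD4 : kenyonD 4 = 1 + I := rfl
lemma my_kD5 : kenyonD 5 = 2 + I := rfl
lemma my_kD6 : kenyonD 6 = (Real.sqrt 2 / 4 : ℝ) + 2 * I := rfl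
lemma my_kD7 : kenyonD 7 = (Real.sqrt 2 / 4 : ℝ) + 1 + 2 * I := rfl
lemma my_kD8 : kenyonD 8 = (Real.sqrt 2 / 4 : ℝ) + 2 + 2 * I := rfl

lemma my_kenyon_digit (d : ℂ) (hd : d ∈ Set.range kenyonD) :
    ((d.im = 0 ∨ d.im = 1) ∧ (d.re = 0 ∨ d.re = 1 ∨ d.re = 2)) ∨
    (d.im = 2 ∧ (d.re = Real.sqrt 2 / 4 ∨ d.re = Real.sqrt 2 / 4 + 1 ∨
      d.re = Real.sqrt 2 / 4 + 2)) := by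
  obtain ⟨j, rfl⟩ := hd
  fin_cases j <;>
    simp [my_kD0, my_kD1, my_kD2, my_kD3, my_kD4, my_kD5, my_kD6, my_kD7, my_kD8]

lemma my_div_pow_re (w : ℂ) (n : ℕ) : (w / 3 ^ n).re = w.re / 3 ^ n := by
  rw [show ((3:ℂ)^n) = (((3:ℝ)^n : ℝ) : ℂ) by push_cast; ring, Complex.div_ofReal_re]

lemma my_div_pow_im (w : ℂ) (n : ℕ) : (w / 3 ^ n).im = w.im / 3 ^ n := by
  rw [show ((3:ℂ)^n) = (((3:ℝ)^n : ℝ) : ℂ) by push_cast; ring, Complex.div_ofReal_im]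

theorem kenyon_no_double_eventually_periodic_coding
    (z : ℂ) (hz : z.im = 1 / 3)
    (a b : ℕ → ℂ)
    (ha : ∀ k, a k ∈ Set.range kenyonD)
    (hb : ∀ k, b k ∈ Set.range kenyonD)
    (hza : z = ∑' k : ℕ, a k / 3 ^ (k + 1))
    (hzb : z = ∑' k : ℕ, b k / 3 ^ (k + 1))
    (ha0 : (a 0).im = 0) (hb0 : (b 0).im = 1)
    (hap : EvPeriodic a) (hbp : EvPeriodic b) :
    False := by
  have hε0 : (0:ℝ) ≤ Real.sqrt 2 / 4 := by positivity
  have hε1 : Real.sqrt 2 / 4 ≤ 1 := by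
    nlinarith [Real.sq_sqrt (show (0:ℝ) ≤ 2 by norm_num), Real.sqrt_nonneg 2]
  have hda := fun k => my_kenyon_digit (a k) (ha k)
  have hdb := fun k => my_kenyon_digit (b k) (hb k)
  -- bounds
  have hare : ∀ k, |(a k).re| ≤ 3 := by
    intro k
    rw [abs_le]
    rcases hda k with ⟨_, h|h|h⟩|⟨_, h|h|h⟩ <;> rw [h] <;> constructor <;> linarith
  have hbre3 : ∀ k, |(b k).re| ≤ 3 := by
    intro k
    rw [abs_le]
    rcases hdb k with ⟨_, h|h|h⟩|⟨_, h|h|h⟩ <;> rw [h] <;> constructor <;> linarith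
  have haim01 : ∀ (c : ℕ → ℂ), (∀ k, c k ∈ Set.range kenyonD) →
      ∀ k, 0 ≤ (c k).im ∧ (c k).im ≤ 2 := by
    intro c hc k
    rcases my_kenyon_digit (c k) (hc k) with ⟨h|h, _⟩|⟨h, _⟩ <;> rw [h] <;> norm_num
  have haim := haim01 a ha
  have hbim01 := haim01 b hb
  have haim3 : ∀ k, |(a k).im| ≤ 3 := by
    intro k; rw [abs_le]; constructor <;> linarith [(haim k).1, (haim k).2]
  have hbim3 : ∀ k, |(b k).im| ≤ 3 := by
    intro k; rw [abs_le]; constructor <;> linarith [(hbim01 k).1, (hbim01 k).2]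
  -- summability of real and imaginary digit series
  have hsaR : Summable (fun k => (a k).re / 3 ^ (k + 1)) := my_summable_aux _ hare
  have hsaI : Summable (fun k => (a k).im / 3 ^ (k + 1)) := my_summable_aux _ haim3
  have hsbR : Summable (fun k => (b k).re / 3 ^ (k + 1)) := my_summable_aux _ hbre3
  have hsbI : Summable (fun k => (b k).im / 3 ^ (k + 1)) := my_summable_aux _ hbim3
  -- z's real and imaginary parts as real series
  have key : ∀ (c : ℕ → ℂ), Summable (fun k => (c k).re / 3 ^ (k + 1)) →
      Summable (fun k => (c k).im / 3 ^ (k + 1)) →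
      z = ∑' k : ℕ, c k / 3 ^ (k + 1) →
      z.re = ∑' k : ℕ, (c k).re / 3 ^ (k + 1) ∧
      z.im = ∑' k : ℕ, (c k).im / 3 ^ (k + 1) := by
    intro c hR hI hzc
    set w : ℂ := ⟨∑' k : ℕ, (c k).re / 3 ^ (k + 1), ∑' k : ℕ, (c k).im / 3 ^ (k + 1)⟩ with hw
    have hsum : HasSum (fun k : ℕ => c k / 3 ^ (k + 1)) w := by
      rw [Complex.hasSum_iff]
      constructor
      · have := hR.hasSum
        simpa [my_div_pow_re] using this
      · have := hI.hasSum
        simpa [my_div_pow_im] using this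
    have : z = w := by rw [hzc, hsum.tsum_eq]
    rw [this]
    exact ⟨rfl, rfl⟩
  obtain ⟨hzaR, hzaI⟩ := key a hsaR hsaI hza
  obtain ⟨hzbR, hzbI⟩ := key b hsbR hsbI hzb
  -- imaginary part analysis for b : all digits b_k, k ≥ 1, have im = 0
  have hbim0 : ∀ k, 1 ≤ k → (b k).im = 0 := by
    have htail : Summable (fun k => (b (k + 1)).im / 3 ^ (k + 1 + 1)) :=
      (summable_nat_add_iff (f := fun k => (b k).im / 3 ^ (k + 1)) 1).mpr hsbI
    have hsplit := Summable.tsum_eq_zero_add hsbI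
    rw [← hzbI, hz, hb0] at hsplit
    have htail0 : ∑' k : ℕ, (b (k + 1)).im / 3 ^ (k + 1 + 1) = 0 := by
      have : (1:ℝ)/3 = 1 / 3 ^ (0 + 1) + ∑' k : ℕ, (b (k + 1)).im / 3 ^ (k + 1 + 1) := hsplit
      norm_num at this
      linarith
    have hzero : ∀ k : ℕ, (b (k + 1)).im / 3 ^ (k + 1 + 1) = 0 := by
      intro k
      have hnn : ∀ j : ℕ, 0 ≤ (b (j + 1)).im / 3 ^ (j + 1 + 1) := by
        intro j; exact div_nonneg (hbim01 (j + 1)).1 (by positivity)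
      have hle := Summable.le_tsum htail k (fun j _ => hnn j)
      have := hnn k
      rw [htail0] at hle
      linarith
    intro k hk
    obtain ⟨j, rfl⟩ : ∃ j, k = j + 1 := ⟨k - 1, by omega⟩
    have := hzero j
    have h3 : (0:ℝ) < 3 ^ (j + 1 + 1) := by positivity
    field_simp at this
    simpa using this
  -- imaginary part analysis for a : all digits a_k, k ≥ 1, have im = 2
  have haim2 : ∀ k, 1 ≤ k → (a k).im = 2 := by
    have htail : Summable (fun k => (a (k + 1)).im / 3 ^ (k + 1 + 1)) :=
      (summable_nat_add_iff (f := fun k => (a k).im / 3 ^ (k + 1)) 1).mpr hsaI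
    have hsplit := Summable.tsum_eq_zero_add hsaI
    rw [← hzaI, hz, ha0] at hsplit
    have htail3 : ∑' k : ℕ, (a (k + 1)).im / 3 ^ (k + 1 + 1) = 1/3 := by
      have : (1:ℝ)/3 = 0 / 3 ^ (0 + 1) + ∑' k : ℕ, (a (k + 1)).im / 3 ^ (k + 1 + 1) := hsplit
      norm_num at this
      linarith
    have hs2 : Summable (fun k : ℕ => 2 / (3:ℝ) ^ (k + 1 + 1)) := by
      have hg0 : Summable (fun k : ℕ => ((1:ℝ)/3) ^ k) :=
        summable_geometric_of_lt_one (by norm_num) (by norm_num)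
      have hg2 : Summable (fun k : ℕ => ((1:ℝ)/3) ^ (k + 2)) := (summable_nat_add_iff 2).mpr hg0
      have := hg2.mul_left 2
      refine this.congr (fun k => ?_)
      rw [div_pow, one_pow]
      ring
    have hsum2 : ∑' k : ℕ, 2 / (3:ℝ) ^ (k + 1 + 1) = 1/3 := by
      have h1 : ∀ k : ℕ, 2 / (3:ℝ) ^ (k + 1 + 1) = 2 * ((1:ℝ)/3) ^ (k + 2) := by
        intro k
        rw [div_pow, one_pow]
        ring
      rw [tsum_congr h1, tsum_mul_left, my_geo2]
      norm_num
    have hdiff : Summable (fun k : ℕ => 2 / (3:ℝ) ^ (k + 1 + 1) - (a (k + 1)).im / 3 ^ (k + 1 + 1)) :=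
      hs2.sub htail
    have hdiff0 : ∑' k : ℕ, (2 / (3:ℝ) ^ (k + 1 + 1) - (a (k + 1)).im / 3 ^ (k + 1 + 1)) = 0 := by
      rw [Summable.tsum_sub hs2 htail, hsum2, htail3]
      ring
    have hzero : ∀ k : ℕ, 2 / (3:ℝ) ^ (k + 1 + 1) - (a (k + 1)).im / 3 ^ (k + 1 + 1) = 0 := by
      intro k
      have hnn : ∀ j : ℕ, 0 ≤ 2 / (3:ℝ) ^ (j + 1 + 1) - (a (j + 1)).im / 3 ^ (j + 1 + 1) := by
        intro j
        have h2 := (haim (j + 1)).2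
        have h3 : (0:ℝ) < 3 ^ (j + 1 + 1) := by positivity
        rw [sub_nonneg, div_le_div_iff₀ h3 h3]
        nlinarith
      have hle := Summable.le_tsum hdiff k (fun j _ => hnn j)
      have := hnn k
      rw [hdiff0] at hle
      linarith
    intro k hk
    obtain ⟨j, rfl⟩ : ∃ j, k = j + 1 := ⟨k - 1, by omega⟩
    have := hzero j
    have h3 : (3:ℝ) ^ (j + 1 + 1) ≠ 0 := by positivity
    rw [sub_eq_zero, div_eq_div_iff h3 h3] at this
    have h3' : (0:ℝ) < 3 ^ (j + 1 + 1) := by positivity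
    nlinarith
  -- real parts of b are in {0,1,2}
  have hbre : ∀ k, (b k).re = 0 ∨ (b k).re = 1 ∨ (b k).re = 2 := by
    intro k
    rcases hdb k with ⟨_, h⟩|⟨h2, _⟩
    · exact h
    · exfalso
      rcases Nat.eq_zero_or_pos k with rfl|hk
      · rw [hb0] at h2; norm_num at h2
      · rw [hbim0 k hk] at h2; norm_num at h2
  -- real parts of a : a 0 in {0,1,2}, a k = ε + {0,1,2} for k ≥ 1
  have ha0re : (a 0).re = 0 ∨ (a 0).re = 1 ∨ (a 0).re = 2 := by
    rcases hda 0 with ⟨_, h⟩|⟨h2, _⟩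
    · exact h
    · rw [ha0] at h2; norm_num at h2
  have hakre : ∀ k, 1 ≤ k → ((a k).re - Real.sqrt 2 / 4 = 0 ∨ (a k).re - Real.sqrt 2 / 4 = 1 ∨
      (a k).re - Real.sqrt 2 / 4 = 2) := by
    intro k hk
    rcases hda k with ⟨h2|h2, _⟩|⟨_, h⟩
    · rw [haim2 k hk] at h2; norm_num at h2
    · rw [haim2 k hk] at h2; norm_num at h2
    · rcases h with h|h|h <;> rw [h]
      · exact Or.inl (by ring)
      · exact Or.inr (Or.inl (by ring))
      · exact Or.inr (Or.inr (by ring))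
  -- rational value for the b-side real part
  obtain ⟨pB, mB, hmB, hperB⟩ := hbp
  obtain ⟨qB, hqB⟩ : ∃ q : ℚ, ∑' k : ℕ, (b k).re / 3 ^ (k + 1) = (q : ℝ) := by
    refine my_rat_tsum _ hbre3 (fun k => ?_) pB mB hmB (fun k hk => by rw [hperB k hk])
    rcases hbre k with h|h|h
    · exact ⟨0, by rw [h]; norm_num⟩
    · exact ⟨1, by rw [h]; norm_num⟩
    · exact ⟨2, by rw [h]; norm_num⟩
  -- rational value for the shifted a-side real part
  set xa : ℕ → ℝ := fun k => if k = 0 then (a 0).re else (a k).re - Real.sqrt 2 / 4 with hxa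
  have hxaval : ∀ k, xa k = 0 ∨ xa k = 1 ∨ xa k = 2 := by
    intro k
    by_cases hk0 : k = 0
    · subst hk0; simpa [hxa] using ha0re
    · have hk1 : 1 ≤ k := by omega
      simpa [hxa, hk0] using hakre k hk1
  have hxa3 : ∀ k, |xa k| ≤ 3 := by
    intro k; rw [abs_le]; rcases hxaval k with h|h|h <;> rw [h] <;> constructor <;> norm_num
  obtain ⟨pA, mA, hmA, hperA⟩ := hap
  obtain ⟨qA, hqA⟩ : ∃ q : ℚ, ∑' k : ℕ, xa k / 3 ^ (k + 1) = (q : ℝ) := by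
    refine my_rat_tsum _ hxa3 (fun k => ?_) (pA + 1) mA hmA (fun k hk => ?_)
    · rcases hxaval k with h|h|h
      · exact ⟨0, by rw [h]; norm_num⟩
      · exact ⟨1, by rw [h]; norm_num⟩
      · exact ⟨2, by rw [h]; norm_num⟩
    · have hk1 : k ≠ 0 := by omega
      have hkm : k + mA ≠ 0 := by omega
      have := hperA k (by omega)
      simp only [hxa, if_neg hk1, if_neg hkm]
      rw [this]
  -- decompose the a-side real part
  set c : ℕ → ℝ := fun k => if k = 0 then 0 else Real.sqrt 2 / 4 with hc
  have hc3 : ∀ k, |c k| ≤ 3 := by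
    intro k
    rw [abs_le]
    by_cases hk0 : k = 0 <;> simp [hc, hk0] <;> constructor <;> linarith
  have hsum_xa : Summable (fun k => xa k / 3 ^ (k + 1)) := my_summable_aux _ hxa3
  have hsum_c : Summable (fun k => c k / 3 ^ (k + 1)) := my_summable_aux _ hc3
  have hsplit : ∀ k, (a k).re / 3 ^ (k + 1) = xa k / 3 ^ (k + 1) + c k / 3 ^ (k + 1) := by
    intro k
    rw [← add_div]
    congr 1
    by_cases hk0 : k = 0 <;> simp [hxa, hc, hk0]
  have hRa : ∑' k : ℕ, (a k).re / 3 ^ (k + 1) =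
      (∑' k : ℕ, xa k / 3 ^ (k + 1)) + ∑' k : ℕ, c k / 3 ^ (k + 1) := by
    rw [tsum_congr hsplit, Summable.tsum_add hsum_xa hsum_c]
  have hCsum : ∑' k : ℕ, c k / 3 ^ (k + 1) = Real.sqrt 2 / 24 := by
    rw [Summable.tsum_eq_zero_add hsum_c]
    have h0 : c 0 / 3 ^ (0 + 1) = 0 := by simp [hc]
    have h1 : ∀ k : ℕ, c (k + 1) / 3 ^ (k + 1 + 1) = (Real.sqrt 2 / 4) * ((1:ℝ)/3) ^ (k + 2) := by
      intro k
      simp only [hc, if_neg (Nat.succ_ne_zero k)]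
      rw [div_pow, one_pow]
      ring
    rw [h0, tsum_congr h1, tsum_mul_left, my_geo2]
    ring
  -- conclude
  have hfin1 : (qA : ℝ) + Real.sqrt 2 / 24 = (qB : ℝ) := by
    rw [← hqA, ← hqB, ← hCsum, ← hRa, ← hzaR, hzbR]
  have : Real.sqrt 2 = ((24 * (qB - qA) : ℚ) : ℝ) := by push_cast; linarith
  exact irrational_sqrt_two ⟨24 * (qB - qA), this.symm⟩
end

section
/- For every feasible neighbor map f = S_J^{-1} ∘ S_I (I, J non-comparable words with r_* < r_I/r_J ≤ r_*^{-1}), there is a walk in the complete neighbor graph Δ_0 from some basic neighbor map S_j^{-1} ∘ S_i (i ≠ j ∈ Σ) to f. -/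
/-- `wordEquiv S [i₁,…,iₘ] = S i₁ ∘ ⋯ ∘ S iₘ` (as an equivalence). -/
def wordEquiv {E : Type*} {N : ℕ} (S : Fin N → E ≃ E) (I : List (Fin N)) : E ≃ E :=
  I.foldr (fun i e => e.trans (S i)) (Equiv.refl E)

/-- Two words are non-comparable if neither is a prefix of the other. -/
def NonComp {N : ℕ} (I J : List (Fin N)) : Prop := ¬ I <+: J ∧ ¬ J <+: I

/-- The neighbor map `S_J⁻¹ ∘ S_I`. -/
def nbrMap {E : Type*} {N : ℕ} (S : Fin N → E ≃ E) (I J : List (Fin N)) : E ≃ E :=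
  (wordEquiv S I).trans (wordEquiv S J).symm

/-- Feasible neighbor maps: `f = S_J⁻¹ ∘ S_I` with `I, J` non-comparable and
`r_* < r_I / r_J ≤ r_*⁻¹`. -/
def Feasible {E : Type*} {N : ℕ} (S : Fin N → E ≃ E) (r : Fin N → ℝ) (rst : ℝ)
    (f : E ≃ E) : Prop :=
  ∃ I J : List (Fin N), NonComp I J ∧
    rst < (I.map r).prod / (J.map r).prod ∧
    (I.map r).prod / (J.map r).prod ≤ rst⁻¹ ∧
    f = nbrMap S I J

/-- Edges of the complete neighbor graph `Δ₀` between feasible maps: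
`g = f ∘ S i` or `g = S i⁻¹ ∘ f` for some `i`. -/
def edgeDelta0 {E : Type*} {N : ℕ} (S : Fin N → E ≃ E) (r : Fin N → ℝ) (rst : ℝ)
    (f g : E ≃ E) : Prop :=
  Feasible S r rst f ∧ Feasible S r rst g ∧
    ∃ i : Fin N, g = (S i).trans f ∨ g = f.trans (S i).symm

section AuxNbr

variable {E : Type*} {N : ℕ}

lemma wordEquiv_nil (S : Fin N → E ≃ E) : wordEquiv S ([] : List (Fin N)) = Equiv.refl E := rfl

lemma wordEquiv_cons (S : Fin N → E ≃ E) (i : Fin N) (I : List (Fin N)) :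
    wordEquiv S (i :: I) = (wordEquiv S I).trans (S i) := rfl

lemma wordEquiv_append (S : Fin N → E ≃ E) (A B : List (Fin N)) :
    wordEquiv S (A ++ B) = (wordEquiv S B).trans (wordEquiv S A) := by
  induction A with
  | nil => simp [wordEquiv_nil]
  | cons a A ih => simp only [List.cons_append, wordEquiv_cons, ih, Equiv.trans_assoc]

lemma nbrMap_append_right (S : Fin N → E ≃ E) (A B : List (Fin N)) (k : Fin N) :
    nbrMap S A (B ++ [k]) = (nbrMap S A B).trans (S k).symm := by
  ext x
  simp [nbrMap, wordEquiv_append, wordEquiv_cons, wordEquiv_nil]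

lemma nbrMap_append_left (S : Fin N → E ≃ E) (A B : List (Fin N)) (k : Fin N) :
    nbrMap S (A ++ [k]) B = (S k).trans (nbrMap S A B) := by
  ext x
  simp [nbrMap, wordEquiv_append, wordEquiv_cons, wordEquiv_nil]

lemma nbrMap_cons_cons (S : Fin N → E ≃ E) (k : Fin N) (A B : List (Fin N)) :
    nbrMap S (k :: A) (k :: B) = nbrMap S A B := by
  ext x
  simp [nbrMap, wordEquiv_cons]

lemma NonComp.symm {I J : List (Fin N)} (h : NonComp I J) : NonComp J I := ⟨h.2, h.1⟩

lemma NonComp.append_right {A B : List (Fin N)} (h : NonComp A B) (X : List (Fin N)) :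
    NonComp (A ++ X) B := by
  constructor
  · exact fun hp => h.1 ((List.prefix_append A X).trans hp)
  · intro hp
    rcases le_or_gt B.length A.length with hl | hl
    · exact h.2 (List.prefix_of_prefix_length_le hp (List.prefix_append A X) hl)
    · exact h.1 (List.prefix_of_prefix_length_le (List.prefix_append A X) hp hl.le)

lemma NonComp.append_left {A B : List (Fin N)} (h : NonComp A B) (X : List (Fin N)) :
    NonComp A (B ++ X) := (h.symm.append_right X).symm

lemma nonComp_cons {i j : Fin N} (hij : i ≠ j) (A B : List (Fin N)) :
    NonComp (i :: A) (j :: B) := by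
  constructor
  · intro hp; rw [List.cons_prefix_cons] at hp; exact hij hp.1
  · intro hp; rw [List.cons_prefix_cons] at hp; exact hij hp.1.symm

variable {r : Fin N → ℝ}

lemma prodR_pos (hr0 : ∀ k, 0 < r k) (L : List (Fin N)) : 0 < (L.map r).prod := by
  apply List.prod_pos
  intro x hx
  simp only [List.mem_map] at hx
  obtain ⟨k, -, rfl⟩ := hx
  exact hr0 k

lemma prodR_le_one (hr0 : ∀ k, 0 < r k) (hr1 : ∀ k, r k < 1) (L : List (Fin N)) :
    (L.map r).prod ≤ 1 := by
  induction L with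
  | nil => simp
  | cons a L ih =>
    simp only [List.map_cons, List.prod_cons]
    nlinarith [prodR_pos hr0 L, hr0 a, hr1 a]

/-- The inductive engine: extend a feasible pair letter by letter, staying feasible. -/
lemma engine (S : Fin N → E ≃ E) (rst : ℝ)
    (hr0 : ∀ k, 0 < r k) (hr1 : ∀ k, r k < 1) (hrle : ∀ k, rst ≤ r k)
    (hrst0 : 0 < rst) (hrst1 : rst < 1) :
    ∀ n (I₂ J₂ A B : List (Fin N)), I₂.length + J₂.length = n →
      NonComp A B →
      rst < (A.map r).prod / (B.map r).prod →
      (A.map r).prod / (B.map r).prod ≤ rst⁻¹ →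
      rst < ((A ++ I₂).map r).prod / ((B ++ J₂).map r).prod →
      ((A ++ I₂).map r).prod / ((B ++ J₂).map r).prod ≤ rst⁻¹ →
      Relation.ReflTransGen (edgeDelta0 S r rst) (nbrMap S A B) (nbrMap S (A ++ I₂) (B ++ J₂)) := by
  have hinv0 : 0 < rst⁻¹ := inv_pos.2 hrst0
  have hinv1 : (1 : ℝ) ≤ rst⁻¹ := one_le_inv_iff₀.2 ⟨hrst0, hrst1.le⟩
  have hmul : rst * rst⁻¹ = 1 := mul_inv_cancel₀ hrst0.ne'
  intro n
  induction n with
  | zero =>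
    intro I₂ J₂ A B hlen _ _ _ _ _
    have hI : I₂ = [] := List.length_eq_zero_iff.mp (by omega)
    have hJ : J₂ = [] := List.length_eq_zero_iff.mp (by omega)
    subst hI; subst hJ
    rw [List.append_nil, List.append_nil]
  | succ m ih =>
    intro I₂ J₂ A B hlen hNC h1 h2 h3 h4
    have hpA : 0 < (A.map r).prod := prodR_pos hr0 A
    have hpB : 0 < (B.map r).prod := prodR_pos hr0 B
    set pA := (A.map r).prod with hpAdef
    set pB := (B.map r).prod with hpBdef
    rcases le_or_gt (pA / pB) 1 with hρ | hρ
    · -- ratio ≤ 1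
      cases J₂ with
      | cons k J₂' =>
        -- extend B by k
        have hprod : (((B ++ [k]).map r).prod) = pB * r k := by
          simp [hpBdef]
        have hnew1 : rst < pA / (pB * r k) := by
          have : pA / pB ≤ pA / pB / r k := by
            rw [le_div_iff₀ (hr0 k)]
            nlinarith [div_pos hpA hpB, hr1 k]
          rw [← div_div]
          linarith
        have hnew2 : pA / (pB * r k) ≤ rst⁻¹ := by
          rw [div_le_iff₀ (mul_pos hpB (hr0 k))]
          nlinarith [(div_le_one hpB).mp hρ, mul_le_mul_of_nonneg_left (hrle k) hinv0.le, hmul,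
            hpB.le, hpB]
        have hNC' : NonComp A (B ++ [k]) := hNC.append_left [k]
        have hre : B ++ k :: J₂' = (B ++ [k]) ++ J₂' := by simp
        rw [hre] at h3 h4 ⊢
        refine Relation.ReflTransGen.head ?_ (ih I₂ J₂' A (B ++ [k]) (by simp at hlen ⊢; omega)
          hNC' (by rw [hprod]; exact hnew1) (by rw [hprod]; exact hnew2) h3 h4)
        refine ⟨⟨A, B, hNC, h1, h2, rfl⟩,
          ⟨A, B ++ [k], hNC', by rw [hprod]; exact hnew1, by rw [hprod]; exact hnew2, rfl⟩,
          k, Or.inr (nbrMap_append_right S A B k)⟩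
      | nil =>
        -- must extend A
        cases I₂ with
        | nil => simp at hlen
        | cons k I₂' =>
          have hprod : (((A ++ [k]).map r).prod) = pA * r k := by
            simp [hpAdef]
          have hpI : 0 < ((I₂'.map r).prod) := prodR_pos hr0 I₂'
          have hpI1 : ((I₂'.map r).prod) ≤ 1 := prodR_le_one hr0 hr1 I₂'
          have h3' : rst < pA * (r k * (I₂'.map r).prod) / pB := by
            have : ((A ++ k :: I₂').map r).prod = pA * (r k * (I₂'.map r).prod) := by
              simp [hpAdef]
            rw [List.append_nil, this] at h3
            exact h3
          have hnew1 : rst < pA * r k / pB := by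
            have hle : pA * (r k * (I₂'.map r).prod) / pB ≤ pA * r k / pB := by
              apply div_le_div_of_nonneg_right ?_ hpB.le
              nlinarith [mul_nonneg (mul_pos hpA (hr0 k)).le (sub_nonneg.2 hpI1)]
            linarith
          have hnew2 : pA * r k / pB ≤ rst⁻¹ := by
            have : pA * r k / pB ≤ pA / pB := by
              apply div_le_div_of_nonneg_right ?_ hpB.le
              nlinarith [hr1 k]
            linarith
          have hNC' : NonComp (A ++ [k]) B := hNC.append_right [k]
          have hre : A ++ k :: I₂' = (A ++ [k]) ++ I₂' := by simp
          rw [hre] at h3 h4 ⊢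
          refine Relation.ReflTransGen.head ?_ (ih I₂' [] (A ++ [k]) B (by simp at hlen ⊢; omega)
            hNC' (by rw [hprod]; exact hnew1) (by rw [hprod]; exact hnew2) h3 h4)
          refine ⟨⟨A, B, hNC, h1, h2, rfl⟩,
            ⟨A ++ [k], B, hNC', by rw [hprod]; exact hnew1, by rw [hprod]; exact hnew2, rfl⟩,
            k, Or.inl (nbrMap_append_left S A B k)⟩
    · -- ratio > 1
      cases I₂ with
      | cons k I₂' =>
        -- extend A by k
        have hprod : (((A ++ [k]).map r).prod) = pA * r k := by
          simp [hpAdef]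
        have hnew1 : rst < pA * r k / pB := by
          rw [lt_div_iff₀ hpB]
          have h1' : 1 < pA / pB := hρ
          rw [lt_div_iff₀ hpB] at h1'
          nlinarith [hrle k, hr0 k]
        have hnew2 : pA * r k / pB ≤ rst⁻¹ := by
          have : pA * r k / pB ≤ pA / pB := by
            apply div_le_div_of_nonneg_right ?_ hpB.le
            nlinarith [hr1 k]
          linarith
        have hNC' : NonComp (A ++ [k]) B := hNC.append_right [k]
        have hre : A ++ k :: I₂' = (A ++ [k]) ++ I₂' := by simp
        rw [hre] at h3 h4 ⊢
        refine Relation.ReflTransGen.head ?_ (ih I₂' J₂ (A ++ [k]) B (by simp at hlen ⊢; omega)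
          hNC' (by rw [hprod]; exact hnew1) (by rw [hprod]; exact hnew2) h3 h4)
        refine ⟨⟨A, B, hNC, h1, h2, rfl⟩,
          ⟨A ++ [k], B, hNC', by rw [hprod]; exact hnew1, by rw [hprod]; exact hnew2, rfl⟩,
          k, Or.inl (nbrMap_append_left S A B k)⟩
      | nil =>
        cases J₂ with
        | nil => simp at hlen
        | cons k J₂' =>
          have hprod : (((B ++ [k]).map r).prod) = pB * r k := by
            simp [hpBdef]
          have hpJ : 0 < ((J₂'.map r).prod) := prodR_pos hr0 J₂'
          have hpJ1 : ((J₂'.map r).prod) ≤ 1 := prodR_le_one hr0 hr1 J₂'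
          have h4' : pA / (pB * (r k * (J₂'.map r).prod)) ≤ rst⁻¹ := by
            have : ((B ++ k :: J₂').map r).prod = pB * (r k * (J₂'.map r).prod) := by
              simp [hpBdef]
            rw [List.append_nil, this] at h4
            exact h4
          have hnew2 : pA / (pB * r k) ≤ rst⁻¹ := by
            have hle : pA / (pB * r k) ≤ pA / (pB * (r k * (J₂'.map r).prod)) := by
              apply div_le_div_of_nonneg_left hpA.le (mul_pos hpB (mul_pos (hr0 k) hpJ))
              nlinarith [mul_nonneg (mul_pos hpB (hr0 k)).le (sub_nonneg.2 hpJ1)]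
            linarith
          have hnew1 : rst < pA / (pB * r k) := by
            have : pA / pB ≤ pA / (pB * r k) := by
              apply div_le_div_of_nonneg_left hpA.le (mul_pos hpB (hr0 k))
              nlinarith [hr1 k, hr0 k, hpB]
            linarith
          have hNC' : NonComp A (B ++ [k]) := hNC.append_left [k]
          have hre : B ++ k :: J₂' = (B ++ [k]) ++ J₂' := by simp
          rw [hre] at h3 h4 ⊢
          refine Relation.ReflTransGen.head ?_ (ih [] J₂' A (B ++ [k]) (by simp at hlen ⊢; omega)
            hNC' (by rw [hprod]; exact hnew1) (by rw [hprod]; exact hnew2) h3 h4)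
          refine ⟨⟨A, B, hNC, h1, h2, rfl⟩,
            ⟨A, B ++ [k], hNC', by rw [hprod]; exact hnew1, by rw [hprod]; exact hnew2, rfl⟩,
            k, Or.inr (nbrMap_append_right S A B k)⟩

/-- Main generic lemma: strip the common prefix, then run the engine. -/
lemma main_walk (S : Fin N → E ≃ E) (rst : ℝ)
    (hr0 : ∀ k, 0 < r k) (hr1 : ∀ k, r k < 1) (hrle : ∀ k, rst ≤ r k)
    (hrst0 : 0 < rst) (hrst1 : rst < 1) :
    ∀ (I J : List (Fin N)), NonComp I J →
      rst < (I.map r).prod / (J.map r).prod →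
      (I.map r).prod / (J.map r).prod ≤ rst⁻¹ →
      ∃ i j : Fin N, i ≠ j ∧
        Relation.ReflTransGen (edgeDelta0 S r rst) (nbrMap S [i] [j]) (nbrMap S I J) := by
  intro I
  induction I with
  | nil => intro J hIJ; exact absurd List.nil_prefix hIJ.1
  | cons a I' ihI =>
    intro J hIJ h1 h2
    cases J with
    | nil => exact absurd List.nil_prefix hIJ.2
    | cons b J' =>
      rcases eq_or_ne a b with rfl | hab
      · -- strip the common head
        have hNC' : NonComp I' J' := by
          constructor
          · intro hp; exact hIJ.1 (List.cons_prefix_cons.2 ⟨rfl, hp⟩)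
          · intro hp; exact hIJ.2 (List.cons_prefix_cons.2 ⟨rfl, hp⟩)
        have hratio : ((a :: I').map r).prod / ((a :: J').map r).prod
            = (I'.map r).prod / (J'.map r).prod := by
          simp only [List.map_cons, List.prod_cons]
          rw [mul_div_mul_left _ _ (hr0 a).ne']
        rw [hratio] at h1 h2
        obtain ⟨i, j, hij, hw⟩ := ihI J' hNC' h1 h2
        exact ⟨i, j, hij, by rwa [nbrMap_cons_cons]⟩
      · -- distinct heads: run the engine from ([a], [b])
        have hbase1 : rst < ((([a] : List (Fin N)).map r).prod) / ((([b] : List (Fin N)).map r).prod) := by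
          simp only [List.map_cons, List.map_nil, List.prod_cons, List.prod_nil, mul_one]
          rw [lt_div_iff₀ (hr0 b)]
          nlinarith [hrle a, hr1 b, hrst0]
        have hbase2 : ((([a] : List (Fin N)).map r).prod) / ((([b] : List (Fin N)).map r).prod) ≤ rst⁻¹ := by
          simp only [List.map_cons, List.map_nil, List.prod_cons, List.prod_nil, mul_one]
          rw [div_le_iff₀ (hr0 b)]
          have hinv0 : 0 < rst⁻¹ := inv_pos.2 hrst0
          have hmul : rst * rst⁻¹ = 1 := mul_inv_cancel₀ hrst0.ne'
          nlinarith [mul_nonneg hinv0.le (sub_nonneg.2 (hrle b)), hr1 a]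
        have hre : ∀ (x : Fin N) (L : List (Fin N)), [x] ++ L = x :: L := by intros; rfl
        have hw := engine S rst hr0 hr1 hrle hrst0 hrst1 (I'.length + J'.length) I' J' [a] [b]
          rfl (nonComp_cons hab [] []) hbase1 hbase2
          (by rw [hre, hre]; exact h1) (by rw [hre, hre]; exact h2)
        rw [hre, hre] at hw
        exact ⟨a, b, hab, hw⟩

end AuxNbr

theorem walk_from_basic_neighbor_map
    {d N : ℕ}
    (S : Fin N → (EuclideanSpace ℝ (Fin d) ≃ EuclideanSpace ℝ (Fin d)))
    (r : Fin N → ℝ)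
    (hr : ∀ i, 0 < r i ∧ r i < 1)
    (hsim : ∀ i x y, dist (S i x) (S i y) = r i * dist x y)
    (rst : ℝ) (hrst : IsLeast (Set.range fun j => |r j|) rst)
    (I J : List (Fin N))
    (hIJ : NonComp I J)
    (hfeas : rst < (I.map r).prod / (J.map r).prod ∧
      (I.map r).prod / (J.map r).prod ≤ rst⁻¹) :
    ∃ i j : Fin N, i ≠ j ∧
      Relation.ReflTransGen (edgeDelta0 S r rst) (nbrMap S [i] [j]) (nbrMap S I J) := by
  have hr0 : ∀ k, 0 < r k := fun k => (hr k).1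
  have hr1 : ∀ k, r k < 1 := fun k => (hr k).2
  have hrle : ∀ k, rst ≤ r k := by
    intro k
    have h : rst ≤ |r k| := hrst.2 ⟨k, rfl⟩
    rwa [abs_of_pos (hr0 k)] at h
  obtain ⟨j0, hj0⟩ := hrst.1
  have hj0' : r j0 = rst := by rw [← abs_of_pos (hr0 j0)]; exact hj0
  have hrst0 : 0 < rst := hj0' ▸ hr0 j0
  have hrst1 : rst < 1 := hj0' ▸ hr1 j0
  exact main_walk S rst hr0 hr1 hrle hrst0 hrst1 I J hIJ hfeas.1 hfeas.2
end

section
/- Let e = {S_i, S_j} be an edge of the Hata graph H(K). If there exist words I_0, I_1, J_0, J_1 ∈ Σ^* with |I_1|, |J_1| ≥ 1 such that S_{i I_0 I_1^k}(K) ∩ S_{j J_0 J_1^k}(K) ≠ ∅ for all k ≥ 1, then the pair {i I_0 (I_1)^∞, j J_0 (J_1)^∞} is a bifurcation pair of e; in particular π(i I_0 (I_1)^∞) = π(j J_0 (J_1)^∞). -/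
/-- The infinite sequence `P C C C ⋯` (prefix `P` followed by the cycle `C` repeated). -/
def seqOf {α : Type*} (P C : List α) (hC : C ≠ []) : ℕ → α := fun n =>
  if hn : n < P.length then P.get ⟨n, hn⟩
  else C.get ⟨(n - P.length) % C.length, Nat.mod_lt _ (List.length_pos_iff.mpr hC)⟩

lemma wordMap_append {E : Type*} {N : ℕ} (S : Fin N → E → E) (L M : List (Fin N)) :
    wordMap S (L ++ M) = wordMap S L ∘ wordMap S M := by
  induction L with
  | nil => rfl
  | cons a L ih => simp [wordMap, ih, Function.comp_assoc]

lemma cylMap_eq_wordMap {E : Type*} {N : ℕ} (S : Fin N → E → E) (ω : ℕ → Fin N) (m : ℕ) :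
    cylMap S ω m = wordMap S (List.ofFn fun k : Fin m => ω k) := by
  induction m with
  | zero => rfl
  | succ m ih =>
    rw [List.ofFn_succ', List.concat_eq_append, wordMap_append]
    show cylMap S ω m ∘ S (ω m) = _
    rw [ih]
    simp [wordMap]

lemma flatten_replicate_get {α : Type*} (C : List α) (hC : C ≠ []) (k n : ℕ)
    (hn : n < ((List.replicate k C).flatten).length) :
    ((List.replicate k C).flatten)[n] =
      C[n % C.length]'(Nat.mod_lt _ (List.length_pos_iff.mpr hC)) := by
  induction k generalizing n with
  | zero => simp at hn
  | succ k ih =>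
    simp only [List.replicate_succ, List.flatten_cons] at hn ⊢
    by_cases h : n < C.length
    · rw [List.getElem_append_left h]
      congr 1
      exact (Nat.mod_eq_of_lt h).symm
    · push_neg at h
      rw [List.getElem_append_right h, ih]
      congr 1
      exact (Nat.mod_eq_sub_mod h).symm

lemma ofFn_seqOf {α : Type*} (P C : List α) (hC : C ≠ []) (k : ℕ) :
    (List.ofFn fun n : Fin (P.length + k * C.length) => seqOf P C hC n) =
      P ++ (List.replicate k C).flatten := by
  apply List.ext_getElem
  · simp [List.length_flatten, List.map_replicate, mul_comm]
  · intro n h1 h2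
    simp only [List.getElem_ofFn]
    unfold seqOf
    by_cases h : n < P.length
    · rw [dif_pos h, List.getElem_append_left h]
      rfl
    · push_neg at h
      rw [dif_neg (not_lt.mpr h), List.getElem_append_right h, flatten_replicate_get C hC]
      rfl

lemma seqOf_evPeriodic {α : Type*} (P C : List α) (hC : C ≠ []) :
    EvPeriodic (seqOf P C hC) := by
  refine ⟨P.length, C.length, List.length_pos_iff.mpr hC, fun k hk => ?_⟩
  have hCpos : 0 < C.length := List.length_pos_iff.mpr hC
  unfold seqOf
  rw [dif_neg (by omega), dif_neg (by omega)]
  congr 1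
  ext
  have h3 : k + C.length - P.length = (k - P.length) + C.length := by omega
  simp [h3, Nat.add_mod_right]

lemma cylMap_dist {d N : ℕ}
    (S : Fin N → EuclideanSpace ℝ (Fin d) → EuclideanSpace ℝ (Fin d))
    (r : Fin N → ℝ) (hsim : ∀ i x y, dist (S i x) (S i y) = r i * dist x y)
    (ρ : ℝ) (hρ0 : 0 ≤ ρ) (hρ : ∀ a, r a ≤ ρ) (ω : ℕ → Fin N) (m : ℕ) :
    ∀ x y, dist (cylMap S ω m x) (cylMap S ω m y) ≤ ρ ^ m * dist x y := by
  induction m with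
  | zero => intro x y; simp [cylMap]
  | succ m ih =>
    intro x y
    calc dist (cylMap S ω (m+1) x) (cylMap S ω (m+1) y)
        = dist (cylMap S ω m (S (ω m) x)) (cylMap S ω m (S (ω m) y)) := rfl
      _ ≤ ρ ^ m * dist (S (ω m) x) (S (ω m) y) := ih _ _
      _ = ρ ^ m * (r (ω m) * dist x y) := by rw [hsim]
      _ ≤ ρ ^ m * (ρ * dist x y) :=
          mul_le_mul_of_nonneg_left
            (mul_le_mul_of_nonneg_right (hρ _) dist_nonneg) (pow_nonneg hρ0 m)
      _ = ρ ^ (m+1) * dist x y := by ring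

theorem bifurcation_pair_from_periodic_intersections
    {d N : ℕ}
    (S : Fin N → EuclideanSpace ℝ (Fin d) → EuclideanSpace ℝ (Fin d))
    (r : Fin N → ℝ)
    (hr : ∀ i, 0 < r i ∧ r i < 1)
    (hsim : ∀ i x y, dist (S i x) (S i y) = r i * dist x y)
    (K : Set (EuclideanSpace ℝ (Fin d)))
    (hKne : K.Nonempty) (hKc : IsCompact K)
    (hKinv : K = ⋃ i, S i '' K)
    (π : (ℕ → Fin N) → EuclideanSpace ℝ (Fin d))
    (hπ : ∀ ω, (⋂ m : ℕ, cylMap S ω (m + 1) '' K) = {π ω})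
    (i j : Fin N) (hij : i ≠ j)
    (hedge : (S i '' K ∩ S j '' K).Nonempty)
    (I₀ I₁ J₀ J₁ : List (Fin N)) (hI₁ : I₁ ≠ []) (hJ₁ : J₁ ≠ [])
    (hinter : ∀ k : ℕ, 1 ≤ k →
      (wordMap S ((i :: I₀) ++ (List.replicate k I₁).flatten) '' K ∩
        wordMap S ((j :: J₀) ++ (List.replicate k J₁).flatten) '' K).Nonempty) :
    EvPeriodic (seqOf (i :: I₀) I₁ hI₁) ∧ EvPeriodic (seqOf (j :: J₀) J₁ hJ₁) ∧
    seqOf (i :: I₀) I₁ hI₁ 0 = i ∧ seqOf (j :: J₀) J₁ hJ₁ 0 = j ∧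
    π (seqOf (i :: I₀) I₁ hI₁) = π (seqOf (j :: J₀) J₁ hJ₁) := by
  have hne : (Finset.univ : Finset (Fin N)).Nonempty := ⟨i, Finset.mem_univ i⟩
  set ρ := Finset.univ.sup' hne r with hρdef
  have hρle : ∀ a, r a ≤ ρ := fun a => Finset.le_sup' r (Finset.mem_univ a)
  have hρ0 : 0 ≤ ρ := le_trans (hr i).1.le (hρle i)
  have hρ1 : ρ < 1 := by
    rw [hρdef, Finset.sup'_lt_iff]
    exact fun a _ => (hr a).2
  obtain ⟨D, hD⟩ := Metric.isBounded_iff.mp hKc.isBounded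
  have hD0 : 0 ≤ D := by
    obtain ⟨z, hz⟩ := hKne
    simpa using hD hz hz
  set ω := seqOf (i :: I₀) I₁ hI₁ with hωdef
  set γ := seqOf (j :: J₀) J₁ hJ₁ with hγdef
  have hπmem : ∀ (σ : ℕ → Fin N) (M : ℕ), 1 ≤ M → π σ ∈ cylMap S σ M '' K := by
    intro σ M hM
    obtain ⟨m, rfl⟩ := Nat.exists_eq_add_of_le hM
    have hmem : π σ ∈ ⋂ m : ℕ, cylMap S σ (m + 1) '' K := by
      rw [hπ]; exact rfl
    have := Set.mem_iInter.mp hmem m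
    simpa [Nat.add_comm] using this
  have hcylω : ∀ k, cylMap S ω ((i :: I₀).length + k * I₁.length) =
      wordMap S ((i :: I₀) ++ (List.replicate k I₁).flatten) := by
    intro k
    rw [cylMap_eq_wordMap, hωdef, ofFn_seqOf]
  have hcylγ : ∀ k, cylMap S γ ((j :: J₀).length + k * J₁.length) =
      wordMap S ((j :: J₀) ++ (List.replicate k J₁).flatten) := by
    intro k
    rw [cylMap_eq_wordMap, hγdef, ofFn_seqOf]
  have key : ∀ k : ℕ, 1 ≤ k → dist (π ω) (π γ) ≤ ρ ^ k * D + ρ ^ k * D := by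
    intro k hk
    obtain ⟨x, ⟨a, ha, hax⟩, ⟨b, hb, hbx⟩⟩ := hinter k hk
    set Mω := (i :: I₀).length + k * I₁.length with hMωdef
    set Mγ := (j :: J₀).length + k * J₁.length with hMγdef
    have hMω1 : 1 ≤ Mω := by simp [hMωdef]; omega
    have hMγ1 : 1 ≤ Mγ := by simp [hMγdef]; omega
    obtain ⟨p, hp, hpπ⟩ := hπmem ω Mω hMω1
    obtain ⟨q, hq, hqπ⟩ := hπmem γ Mγ hMγ1
    have hkMω : k ≤ Mω := by
      have := Nat.le_mul_of_pos_right k (List.length_pos_iff.mpr hI₁)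
      omega
    have hkMγ : k ≤ Mγ := by
      have := Nat.le_mul_of_pos_right k (List.length_pos_iff.mpr hJ₁)
      omega
    have hpowω : ρ ^ Mω ≤ ρ ^ k := pow_le_pow_of_le_one hρ0 hρ1.le hkMω
    have hpowγ : ρ ^ Mγ ≤ ρ ^ k := pow_le_pow_of_le_one hρ0 hρ1.le hkMγ
    have h1 : dist (π ω) x ≤ ρ ^ k * D := by
      rw [← hpπ, ← hax, ← hcylω k]
      calc dist (cylMap S ω Mω p) (cylMap S ω Mω a)
          ≤ ρ ^ Mω * dist p a := cylMap_dist S r hsim ρ hρ0 hρle ω Mω p a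
        _ ≤ ρ ^ k * D := mul_le_mul hpowω (hD hp ha) dist_nonneg (pow_nonneg hρ0 k)
    have h2 : dist x (π γ) ≤ ρ ^ k * D := by
      rw [← hqπ, ← hbx, ← hcylγ k, dist_comm]
      calc dist (cylMap S γ Mγ q) (cylMap S γ Mγ b)
          ≤ ρ ^ Mγ * dist q b := cylMap_dist S r hsim ρ hρ0 hρle γ Mγ q b
        _ ≤ ρ ^ k * D := mul_le_mul hpowγ (hD hq hb) dist_nonneg (pow_nonneg hρ0 k)
    calc dist (π ω) (π γ) ≤ dist (π ω) x + dist x (π γ) := dist_triangle _ _ _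
      _ ≤ ρ ^ k * D + ρ ^ k * D := add_le_add h1 h2
  have hlim : Filter.Tendsto (fun k : ℕ => ρ ^ k * D + ρ ^ k * D)
      Filter.atTop (nhds 0) := by
    have h0 : Filter.Tendsto (fun k : ℕ => ρ ^ k) Filter.atTop (nhds 0) :=
      tendsto_pow_atTop_nhds_zero_of_lt_one hρ0 hρ1
    have := (h0.mul_const D).add (h0.mul_const D)
    simpa using this
  have hle : dist (π ω) (π γ) ≤ 0 :=
    ge_of_tendsto hlim (Filter.eventually_atTop.mpr ⟨1, fun k hk => key k hk⟩)
  refine ⟨seqOf_evPeriodic _ _ _, seqOf_evPeriodic _ _ _, ?_, ?_, dist_le_zero.mp hle⟩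
  · simp [hωdef, hγdef, seqOf]
  · simp [hωdef, hγdef, seqOf]
end
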